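/- arXiv:1204.4787 — 7 statements merged into one kernel-verified Lean document; each statement's English description precedes it below -/
import Mathlib

section
/- Let (g,B) be a non-Abelian quadratic Lie algebra. Then there exist a central ideal z and a nonzero ideal l of g such that: g is the direct sum of z and l with B(z, l) = {0}; the restrictions of B to z × z and to l × l are non-degenerate; l is non-Abelian; the center Z(l) of l is totally isotropic for B and is contained in [l, l]; and dim(Z(l)) ≤ (1/2)·dim(l) ≤ dim([l, l]). -/
open Module

/-- The center of a subspace `S` of a Lie algebra: the set of elements of `S` commuting
with all of `S`, as a submodule. -/
def centerIn (g : Type) [LieRing g] [LieAlgebra ℂ g] (S : Submodule ℂ g) :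
    Submodule ℂ g where
  carrier := {x | x ∈ S ∧ ∀ y ∈ S, ⁅x, y⁆ = (0 : g)}
  add_mem' := by
    rintro a b ⟨ha1, ha2⟩ ⟨hb1, hb2⟩
    exact ⟨S.add_mem ha1 hb1, fun y hy => by rw [add_lie, ha2 y hy, hb2 y hy, add_zero]⟩
  zero_mem' := ⟨S.zero_mem, fun y _ => zero_lie y⟩
  smul_mem' := by
    rintro c a ⟨ha1, ha2⟩
    exact ⟨S.smul_mem c ha1, fun y hy => by rw [smul_lie, ha2 y hy, smul_zero]⟩

lemma mem_centerIn {g : Type} [LieRing g] [LieAlgebra ℂ g] {S : Submodule ℂ g} {x : g} :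
    x ∈ centerIn g S ↔ x ∈ S ∧ ∀ y ∈ S, ⁅x, y⁆ = (0 : g) := Iff.rfl

/-- **Reduction of a quadratic Lie algebra.** Let `(g, B)` be a non-Abelian quadratic Lie
algebra.  Then there exist a central ideal `z` and a nonzero ideal `l` such that `g` is
the orthogonal direct sum of `z` and `l`, the restrictions of `B` to `z` and `l` are
non-degenerate, `l` is non-Abelian, the center `Z(l)` is totally isotropic and contained
in `[l, l]`, and `dim Z(l) ≤ (1/2) dim l ≤ dim [l, l]`. -/
theorem quadratic_reduction (g : Type) [LieRing g] [LieAlgebra ℂ g]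
    [FiniteDimensional ℂ g]
    (B : LinearMap.BilinForm ℂ g)
    (hsymm : ∀ x y : g, B x y = B y x)
    (hnd : B.Nondegenerate)
    (hinv : ∀ x y z : g, B ⁅x, y⁆ z = B x ⁅y, z⁆)
    (hnonab : ¬ IsLieAbelian g) :
    ∃ z l : LieIdeal ℂ g,
      l ≠ ⊥ ∧
      z ≤ LieAlgebra.center ℂ g ∧
      z.toSubmodule ⊓ l.toSubmodule = ⊥ ∧
      z.toSubmodule ⊔ l.toSubmodule = ⊤ ∧
      (∀ x ∈ z, ∀ y ∈ l, B x y = 0) ∧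
      (B.restrict z.toSubmodule).Nondegenerate ∧
      (B.restrict l.toSubmodule).Nondegenerate ∧
      (∃ x ∈ l, ∃ y ∈ l, ⁅x, y⁆ ≠ (0 : g)) ∧
      (∀ x ∈ centerIn g l.toSubmodule, ∀ y ∈ centerIn g l.toSubmodule, B x y = 0) ∧
      centerIn g l.toSubmodule ≤ (⁅l, l⁆ : LieIdeal ℂ g).toSubmodule ∧
      2 * finrank ℂ ↥(centerIn g l.toSubmodule) ≤ finrank ℂ ↥l.toSubmodule ∧
      finrank ℂ ↥l.toSubmodule ≤ 2 * finrank ℂ ↥(⁅l, l⁆ : LieIdeal ℂ g).toSubmodule := by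
  classical
  have hrefl : B.IsRefl := fun x y h => by rw [hsymm]; exact h
  set Zs : Submodule ℂ g := centerIn g ⊤ with hZsdef
  have memZs : ∀ x : g, x ∈ Zs ↔ ∀ y : g, ⁅x, y⁆ = 0 :=
    fun x => ⟨fun h y => h.2 y Submodule.mem_top, fun h => ⟨Submodule.mem_top, fun y _ => h y⟩⟩
  have hZ0 : ∀ w ∈ Zs, ∀ y : g, ⁅w, y⁆ = 0 ∧ ⁅y, w⁆ = 0 := by
    intro w hw y
    have h1 := (memZs w).mp hw y
    exact ⟨h1, by rw [← lie_skew, h1, neg_zero]⟩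
  set Dsub : Submodule ℂ g :=
    (⁅(⊤ : LieIdeal ℂ g), (⊤ : LieIdeal ℂ g)⁆ : LieIdeal ℂ g).toSubmodule with hDdef
  -- the center is the orthogonal of the derived ideal
  have hA : Zs = B.orthogonal Dsub := by
    ext x
    rw [mem_centerIn, LinearMap.BilinForm.mem_orthogonal_iff]
    constructor
    · rintro ⟨-, hx⟩ n hn
      rw [hDdef, LieSubmodule.lieIdeal_oper_eq_linear_span'] at hn
      induction hn using Submodule.span_induction with
      | mem m hm =>
        obtain ⟨a, -, b, -, rfl⟩ := hm
        show B ⁅a, b⁆ x = 0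
        rw [hinv, (hZ0 x ⟨Submodule.mem_top, hx⟩ b).2, map_zero]
      | zero => exact LinearMap.BilinForm.isOrtho_zero_left x
      | add m n _ _ hm hn =>
        show B _ x = 0
        rw [map_add, LinearMap.add_apply, show B m x = 0 from hm, show B n x = 0 from hn, add_zero]
      | smul c m _ hm =>
        show B _ x = 0
        rw [map_smul, LinearMap.smul_apply, show B m x = 0 from hm, smul_zero]
    · intro h
      refine ⟨Submodule.mem_top, fun y _ => ?_⟩
      have key : ∀ a : g, B ⁅x, y⁆ a = 0 := by
        intro a
        have hmem : (⁅y, a⁆ : g) ∈ Dsub := (LieSubmodule.mem_toSubmodule _).mpr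
          (LieSubmodule.lie_mem_lie (LieSubmodule.mem_top y) (LieSubmodule.mem_top a))
        have h2 := h ⁅y, a⁆ hmem
        rw [hinv x y a, hsymm]
        exact h2
      exact hnd.1 _ key
  have hDperp : B.orthogonal Zs = Dsub := by
    rw [hA, LinearMap.BilinForm.orthogonal_orthogonal hnd hrefl]
  set rad : Submodule ℂ g := Zs ⊓ B.orthogonal Zs with hraddef
  obtain ⟨W', hW'⟩ := Submodule.exists_isCompl rad
  set W : Submodule ℂ g := Zs ⊓ W' with hWdef
  have hWZ : W ≤ Zs := inf_le_left
  have hradZ : rad ≤ Zs := inf_le_left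
  have hWrad : rad ⊓ W = ⊥ := by
    rw [eq_bot_iff]
    intro x hx
    have hx2 : x ∈ rad ⊓ W' := ⟨hx.1, hx.2.2⟩
    rwa [hW'.inf_eq_bot] at hx2
  have hWsup : rad ⊔ W = Zs := by
    refine le_antisymm (sup_le hradZ hWZ) ?_
    intro x hx
    obtain ⟨r, hr, w, hw, hrw⟩ := Submodule.mem_sup.mp
      (show x ∈ rad ⊔ W' by rw [hW'.sup_eq_top]; exact Submodule.mem_top)
    have hwZ : w ∈ Zs := by
      have : w = x - r := by rw [← hrw]; abel
      rw [this]; exact Zs.sub_mem hx (hradZ hr)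
    exact Submodule.mem_sup.mpr ⟨r, hr, w, ⟨hwZ, hw⟩, hrw⟩
  -- B restricted to W is nondegenerate
  have hWnd : (B.restrict W).Nondegenerate := by
    refine (LinearMap.IsRefl.nondegenerate_iff_separatingLeft (B := B.restrict W) (fun x y h => hrefl _ _ h)).mpr ?_
    rintro ⟨x, hxW⟩ h
    have hxZ : x ∈ Zs := hWZ hxW
    have hall : ∀ y ∈ Zs, B x y = 0 := by
      intro y hy
      obtain ⟨r, hr, w, hw, hrw⟩ := Submodule.mem_sup.mp (show y ∈ rad ⊔ W by rw [hWsup]; exact hy)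
      have h1 : B x r = 0 := hr.2 x hxZ
      have h2 : B x w = 0 := by simpa using h ⟨w, hw⟩
      rw [← hrw, map_add, h1, h2, add_zero]
    have hxO : x ∈ B.orthogonal Zs := fun n hn => hrefl _ _ (hall n hn)
    have hbot : x ∈ rad ⊓ W := ⟨⟨hxZ, hxO⟩, hxW⟩
    rw [hWrad] at hbot
    exact Subtype.ext hbot
  set lsub : Submodule ℂ g := B.orthogonal W with hlsubdef
  have hcompl : IsCompl W lsub :=
    LinearMap.BilinForm.isCompl_orthogonal_of_restrict_nondegenerate hrefl hWnd
  have hrad_l : rad ≤ lsub := le_trans inf_le_right (LinearMap.BilinForm.orthogonal_le hWZ)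
  have hdecomp : ∀ v : g, ∃ w ∈ W, ∃ x ∈ lsub, v = w + x := by
    intro v
    obtain ⟨w, hw, x, hx, h⟩ := Submodule.mem_sup.mp
      (show v ∈ W ⊔ lsub by rw [hcompl.sup_eq_top]; exact Submodule.mem_top)
    exact ⟨w, hw, x, hx, h.symm⟩
  have hbr : ∀ a b : g, ∃ xa ∈ lsub, ∃ xb ∈ lsub, ⁅a, b⁆ = ⁅xa, xb⁆ := by
    intro a b
    obtain ⟨w, hw, xa, hxa, rfl⟩ := hdecomp a
    obtain ⟨w', hw', xb, hxb, rfl⟩ := hdecomp b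
    refine ⟨xa, hxa, xb, hxb, ?_⟩
    rw [add_lie, (hZ0 w (hWZ hw) _).1, zero_add, lie_add, (hZ0 w' (hWZ hw') xa).2, zero_add]
  -- the two ideals
  set z : LieIdeal ℂ g :=
    { W with
      lie_mem := fun {x m} hm => by
        show ⁅x, m⁆ ∈ W
        rw [(hZ0 m (hWZ hm) x).2]
        exact W.zero_mem } with hzdef
  set l : LieIdeal ℂ g :=
    { lsub with
      lie_mem := fun {x m} hm => by
        show ⁅x, m⁆ ∈ lsub
        intro n hn
        show B n ⁅x, m⁆ = 0
        rw [hsymm, hinv, (hZ0 n (hWZ hn) m).2, map_zero] } with hldef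
  have hzsub : z.toSubmodule = W := rfl
  have hlsub' : l.toSubmodule = lsub := rfl
  set C : Submodule ℂ g := centerIn g lsub with hCdef
  have hCl : ∀ x ∈ C, x ∈ lsub := fun x hx => hx.1
  have hCZ : ∀ x ∈ C, x ∈ Zs := by
    intro x hx
    rw [memZs]
    intro y
    obtain ⟨w, hw, m, hm, rfl⟩ := hdecomp y
    rw [lie_add, (hZ0 w (hWZ hw) x).2, hx.2 m hm, add_zero]
  have hCrad : ∀ x ∈ C, x ∈ rad := by
    intro x hx
    obtain ⟨r, hr, w, hw, hrw⟩ := Submodule.mem_sup.mp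
      (show x ∈ rad ⊔ W by rw [hWsup]; exact hCZ x hx)
    have hwl : w ∈ lsub := by
      have hw' : w = x - r := by rw [← hrw]; abel
      rw [hw']; exact lsub.sub_mem (hCl x hx) (hrad_l hr)
    have hbot : w ∈ W ⊓ lsub := ⟨hw, hwl⟩
    rw [hcompl.inf_eq_bot, Submodule.mem_bot] at hbot
    have : r = x := by rw [← hrw, hbot, add_zero]
    exact this ▸ hr
  have hradC : ∀ x ∈ rad, x ∈ C := by
    intro x hx
    exact ⟨hrad_l hx, fun y _ => (hZ0 x (hradZ hx) y).1⟩
  have hCeq : C = rad := le_antisymm hCrad hradC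
  have hiso : ∀ x ∈ C, ∀ y ∈ C, B x y = 0 := by
    intro x hx y hy
    exact (hCrad y hy).2 x (hCZ x hx)
  -- derived ideal of l equals derived ideal of g
  set Dl : Submodule ℂ g := (⁅l, l⁆ : LieIdeal ℂ g).toSubmodule with hDldef
  have hDl_le : Dl ≤ Dsub :=
    (LieSubmodule.toSubmodule_le_toSubmodule _ _).mpr (LieSubmodule.mono_lie le_top le_top)
  have hD_le : Dsub ≤ Dl := by
    rw [hDdef, LieSubmodule.lieIdeal_oper_eq_linear_span']
    rw [Submodule.span_le]
    rintro m ⟨a, -, b, -, rfl⟩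
    obtain ⟨xa, hxa, xb, hxb, heq⟩ := hbr a b
    rw [heq]
    exact (LieSubmodule.mem_toSubmodule _).mpr (LieSubmodule.lie_mem_lie hxa hxb)
  have hDD : Dsub = Dl := le_antisymm hD_le hDl_le
  -- non-abelian witness
  have hex : ∃ a b : g, ⁅a, b⁆ ≠ 0 := by
    by_contra hcon
    push_neg at hcon
    exact hnonab ⟨fun x y => hcon x y⟩
  obtain ⟨a, b, hab⟩ := hex
  obtain ⟨xa, hxa, xb, hxb, heq⟩ := hbr a b
  -- dimension bookkeeping
  have e1 : finrank ℂ W + finrank ℂ lsub = finrank ℂ g :=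
    Submodule.finrank_add_eq_of_isCompl hcompl
  have e2 : finrank ℂ Dsub = finrank ℂ g - finrank ℂ Zs := by
    rw [← hDperp]; exact LinearMap.BilinForm.finrank_orthogonal hnd Zs
  have e2' : finrank ℂ Zs ≤ finrank ℂ g := Submodule.finrank_le Zs
  have e3 : finrank ℂ Zs = finrank ℂ W + finrank ℂ C := by
    have h4 := Submodule.finrank_sup_add_finrank_inf_eq W rad
    have h1 : W ⊔ rad = Zs := by rw [sup_comm]; exact hWsup
    have h2 : W ⊓ rad = ⊥ := by rw [inf_comm]; exact hWrad
    rw [h1, h2, finrank_bot, add_zero, ← hCeq] at h4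
    omega
  have e5 : 2 * finrank ℂ C ≤ finrank ℂ lsub := by
    have h1 : C ≤ B.orthogonal (C ⊔ W) := by
      intro x hx n hn
      obtain ⟨c, hc, w, hw, hrw⟩ := Submodule.mem_sup.mp hn
      show B n x = 0
      rw [← hrw, map_add, LinearMap.add_apply, hiso c hc x hx,
        show B w x = 0 from hCl x hx w hw, add_zero]
    have h2 := LinearMap.BilinForm.finrank_orthogonal hnd (C ⊔ W)
    have h3 : finrank ℂ C ≤ finrank ℂ (B.orthogonal (C ⊔ W)) := Submodule.finrank_mono h1
    have h4 := Submodule.finrank_sup_add_finrank_inf_eq C W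
    have h5 : C ⊓ W = ⊥ := by
      rw [eq_bot_iff]
      intro x hx
      have hbot : x ∈ W ⊓ lsub := ⟨hx.2, hCl x hx.1⟩
      rw [hcompl.inf_eq_bot] at hbot
      exact hbot
    have h6 : finrank ℂ (C ⊔ W : Submodule ℂ g) ≤ finrank ℂ g := Submodule.finrank_le _
    rw [h5, finrank_bot] at h4
    omega
  refine ⟨z, l, ?_, ?_, ?_, ?_, ?_, ?_, ?_, ?_, ?_, ?_, ?_, ?_⟩
  · -- l ≠ ⊥
    intro h
    apply hab
    rw [heq]
    have hxa' : xa ∈ (⊥ : LieIdeal ℂ g) := h ▸ hxa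
    rw [LieSubmodule.mem_bot] at hxa'
    rw [hxa', zero_lie]
  · -- z ≤ center
    intro x hx
    exact (LieModule.mem_maxTrivSubmodule ℂ g g x).mpr fun y => (hZ0 x (hWZ hx) y).2
  · exact hcompl.inf_eq_bot
  · exact hcompl.sup_eq_top
  · -- orthogonality
    intro x hx y hy
    exact hy x hx
  · exact hWnd
  · -- restrict l nondegenerate
    refine (LinearMap.IsRefl.nondegenerate_iff_separatingLeft (B := B.restrict l.toSubmodule) (fun x y h => hrefl _ _ h)).mpr ?_
    rintro ⟨x, hx⟩ h
    have hall : ∀ y : g, B x y = 0 := by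
      intro y
      obtain ⟨w, hw, m, hm, rfl⟩ := hdecomp y
      have h1 : B x w = 0 := hrefl _ _ (hx w hw)
      have h2 : B x m = 0 := by simpa using h ⟨m, hm⟩
      rw [map_add, h1, h2, add_zero]
    exact Subtype.ext (hnd.1 x fun y => hall y)
  · exact ⟨xa, hxa, xb, hxb, heq ▸ hab⟩
  · exact hiso
  · intro x hx
    exact hD_le (by rw [← hDperp]; exact (hCrad x hx).2)
  · exact e5
  · -- dim l ≤ 2 dim [l,l]
    have : finrank ℂ Dl = finrank ℂ Dsub := by rw [hDD]
    show finrank ℂ lsub ≤ 2 * finrank ℂ Dl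
    omega
end

section
/- Let (g,B) be a non-Abelian quadratic Lie algebra and let g = z ⊕ l be a decomposition as in the reduction: z a central ideal, l a nonzero non-Abelian ideal orthogonal to z, with both restrictions of B non-degenerate and Z(l) totally isotropic. Let g' be a Lie algebra with non-degenerate invariant symmetric bilinear form B' and A : g → g' a Lie algebra isomorphism. Then g' = A(z) ⊕ A(z)⊥ where A(z) is central in g', the center of l' = A(z)⊥ is totally isotropic for B', and l and l' are isomorphic as Lie algebras; moreover, if A additionally satisfies B'(A(X),A(Y)) = B(X,Y) for all X,Y ∈ g then l and l' are i-isomorphic. -/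
/-- The orthogonal complement `{x | B x y = 0 for all y ∈ N}` of a subspace `N` with
respect to a bilinear form `B`. -/
def orthogonalOf (V : Type) [AddCommGroup V] [Module ℂ V]
    (B : LinearMap.BilinForm ℂ V) (N : Submodule ℂ V) : Submodule ℂ V where
  carrier := {x | ∀ y ∈ N, B x y = 0}
  add_mem' := by
    intro a b ha hb y hy
    simp only [map_add, LinearMap.add_apply, ha y hy, hb y hy, add_zero]
  zero_mem' := by
    intro y hy
    simp
  smul_mem' := by
    intro c a ha y hy
    simp only [map_smul, LinearMap.smul_apply, ha y hy, smul_zero]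

lemma mem_orthogonalOf {V : Type} [AddCommGroup V] [Module ℂ V]
    {B : LinearMap.BilinForm ℂ V} {N : Submodule ℂ V} {x : V} :
    x ∈ orthogonalOf V B N ↔ ∀ y ∈ N, B x y = 0 := Iff.rfl

lemma orthogonalOf_eq {V : Type} [AddCommGroup V] [Module ℂ V]
    (B : LinearMap.BilinForm ℂ V) (hs : ∀ x y, B x y = B y x) (N : Submodule ℂ V) :
    orthogonalOf V B N = B.orthogonal N := by
  ext x
  simp only [mem_orthogonalOf, LinearMap.BilinForm.mem_orthogonal_iff, LinearMap.BilinForm.IsOrtho]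
  exact ⟨fun h y hy => (hs y x).trans (h y hy), fun h y hy => (hs x y).trans (h y hy)⟩

lemma orthogonalOf_anti {V : Type} [AddCommGroup V] [Module ℂ V]
    (B : LinearMap.BilinForm ℂ V) {N M : Submodule ℂ V} (h : N ≤ M) :
    orthogonalOf V B M ≤ orthogonalOf V B N :=
  fun _ hx y hy => hx y (h hy)

lemma finrank_orthogonalOf {V : Type} [AddCommGroup V] [Module ℂ V] [FiniteDimensional ℂ V]
    (B : LinearMap.BilinForm ℂ V) (hs : ∀ x y, B x y = B y x) (hnd : B.Nondegenerate)
    (N : Submodule ℂ V) :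
    Module.finrank ℂ (orthogonalOf V B N) = Module.finrank ℂ V - Module.finrank ℂ N := by
  rw [orthogonalOf_eq B hs N]
  exact LinearMap.BilinForm.finrank_orthogonal hnd N

/-- If `Z` is the orthogonal of `W`, `W ≤ Z⊥`, and `Z` is totally isotropic,
then `Z ≤ W` (nondegenerate symmetric form, finite dimensions). -/
lemma isotropic_le_of_orth {V : Type} [AddCommGroup V] [Module ℂ V] [FiniteDimensional ℂ V]
    (B : LinearMap.BilinForm ℂ V) (hs : ∀ x y, B x y = B y x) (hnd : B.Nondegenerate)
    {Z W : Submodule ℂ V} (hZW : Z = orthogonalOf V B W)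
    (hWZ : W ≤ orthogonalOf V B Z) (hiso : Z ≤ orthogonalOf V B Z) : Z ≤ W := by
  have h1 : Module.finrank ℂ Z = Module.finrank ℂ V - Module.finrank ℂ W := by
    rw [hZW]; exact finrank_orthogonalOf B hs hnd W
  have h2 : Module.finrank ℂ (orthogonalOf V B Z) = Module.finrank ℂ V - Module.finrank ℂ Z :=
    finrank_orthogonalOf B hs hnd Z
  have hWv : Module.finrank ℂ W ≤ Module.finrank ℂ V := W.finrank_le
  have hZv : Module.finrank ℂ Z ≤ Module.finrank ℂ V := Z.finrank_le
  have : W = orthogonalOf V B Z := Submodule.eq_of_le_of_finrank_eq hWZ (by omega)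
  rw [this]; exact hiso


/-- In the reduction setting, the center of the ideal `l` is contained in the span of
all brackets, provided `B|_l` is nondegenerate and `Z(l)` is totally isotropic. -/
lemma center_le_derived {g : Type} [LieRing g] [LieAlgebra ℂ g] [FiniteDimensional ℂ g]
    (B : LinearMap.BilinForm ℂ g)
    (hsymm : ∀ x y : g, B x y = B y x)
    (hinv : ∀ x y z : g, B ⁅x, y⁆ z = B x ⁅y, z⁆)
    (l : LieIdeal ℂ g)
    (hndl : (B.restrict l.toSubmodule).Nondegenerate)
    (hZl : ∀ x ∈ centerIn g l.toSubmodule, ∀ y ∈ centerIn g l.toSubmodule, B x y = 0) :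
    centerIn g l.toSubmodule ≤ Submodule.span ℂ {x : g | ∃ a b : g, ⁅a, b⁆ = x} := by
  set L := l.toSubmodule with hL
  set Bl := B.restrict L with hBl
  have hBl_apply : ∀ x y : L, Bl x y = B (x : g) (y : g) := fun x y => rfl
  have hBl_symm : ∀ x y : L, Bl x y = Bl y x := fun x y => hsymm _ _
  set ZL : Submodule ℂ L := (centerIn g L).comap L.subtype with hZL
  set WL : Submodule ℂ L :=
    Submodule.span ℂ {w : L | ∃ a b : L, ⁅(a : g), (b : g)⁆ = (w : g)} with hWL
  have hmemZL : ∀ x : L, x ∈ ZL ↔ ∀ y ∈ L, ⁅(x : g), y⁆ = 0 := by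
    intro x
    constructor
    · exact fun h => h.2
    · exact fun h => ⟨x.2, h⟩
  -- ZL = orthogonal of WL
  have claimA : ZL = orthogonalOf L Bl WL := by
    ext x
    constructor
    · intro hx
      intro w hw
      have : WL ≤ LinearMap.ker (Bl x) := by
        rw [hWL]
        apply Submodule.span_le.2
        rintro w ⟨a, b, hab⟩
        have : Bl x w = 0 := by
          rw [hBl_apply, ← hab, ← hinv]
          rw [(hmemZL x).1 hx (a : g) a.2]
          simp
        simpa [LinearMap.mem_ker] using this
      exact this hw
    · intro hx
      refine (hmemZL x).2 ?_
      intro y hy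
      have hmem : ⁅(x : g), y⁆ ∈ L := l.lie_mem hy
      have : (⟨⁅(x : g), y⁆, hmem⟩ : L) = 0 := by
        apply hndl.1
        intro v
        have hbrmem : ⁅y, (v : g)⁆ ∈ L := l.lie_mem v.2
        have hgen : (⟨⁅y, (v : g)⁆, hbrmem⟩ : L) ∈ WL :=
          Submodule.subset_span ⟨⟨y, hy⟩, v, rfl⟩
        have := hx _ hgen
        rw [hBl_apply] at this ⊢
        simpa [hinv (x : g) y (v : g)] using this
      have := congrArg (Subtype.val) this
      simpa using this
  have claimB : WL ≤ orthogonalOf L Bl ZL := by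
    rw [hWL]
    apply Submodule.span_le.2
    rintro w ⟨a, b, hab⟩
    intro y hy
    rw [hBl_apply, ← hab, hinv]
    have : ⁅(b : g), (y : g)⁆ = 0 := by
      have h0 : ⁅(y : g), (b : g)⁆ = 0 := (hmemZL y).1 hy (b : g) b.2
      rw [← lie_skew, h0, neg_zero]
    rw [this]; simp
  have claimC : ZL ≤ orthogonalOf L Bl ZL := by
    intro x hx y hy
    exact hZl _ hx _ hy
  have key : ZL ≤ WL := isotropic_le_of_orth Bl hBl_symm hndl claimA claimB claimC
  -- now push forward
  intro x hx
  have hx' : (⟨x, hx.1⟩ : L) ∈ ZL := hx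
  have hw : (⟨x, hx.1⟩ : L) ∈ WL := key hx'
  have : x ∈ WL.map L.subtype := ⟨_, hw, rfl⟩
  rw [hWL, Submodule.map_span] at this
  refine Submodule.span_mono ?_ this
  rintro w ⟨⟨w', hw'⟩, ⟨a, b, hab⟩, rfl⟩
  exact ⟨a, b, hab⟩


/-- **Uniqueness of the reduction under isomorphism.** Let `(g, B)` be a non-Abelian
quadratic Lie algebra with reduction `g = z ⊕ l` (with `z` central, `l` nonzero
non-Abelian, the two summands orthogonal, both restrictions of `B` non-degenerate and
`Z(l)` totally isotropic).  Let `(g', B')` be a quadratic Lie algebra and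
`A : g → g'` a Lie algebra isomorphism.  Then `g' = A(z) ⊕ A(z)⊥`, where `A(z)` is
central in `g'`, the center of `l' = A(z)⊥` is totally isotropic for `B'`, and `l` and
`l'` are isomorphic as Lie algebras; if moreover `A` preserves the forms then `l` and
`l'` are i-isomorphic. -/
theorem quadratic_reduction_unique (g g' : Type)
    [LieRing g] [LieAlgebra ℂ g] [FiniteDimensional ℂ g]
    [LieRing g'] [LieAlgebra ℂ g'] [FiniteDimensional ℂ g']
    (B : LinearMap.BilinForm ℂ g) (B' : LinearMap.BilinForm ℂ g')
    (hsymm : ∀ x y : g, B x y = B y x)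
    (hnd : B.Nondegenerate)
    (hinv : ∀ x y z : g, B ⁅x, y⁆ z = B x ⁅y, z⁆)
    (hsymm' : ∀ x y : g', B' x y = B' y x)
    (hnd' : B'.Nondegenerate)
    (hinv' : ∀ x y z : g', B' ⁅x, y⁆ z = B' x ⁅y, z⁆)
    (hnonab : ¬ IsLieAbelian g)
    (z l : LieIdeal ℂ g)
    (hl0 : l ≠ ⊥)
    (hzc : z ≤ LieAlgebra.center ℂ g)
    (hinf : z.toSubmodule ⊓ l.toSubmodule = ⊥)
    (hsup : z.toSubmodule ⊔ l.toSubmodule = ⊤)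
    (horth : ∀ x ∈ z, ∀ y ∈ l, B x y = 0)
    (hndz : (B.restrict z.toSubmodule).Nondegenerate)
    (hndl : (B.restrict l.toSubmodule).Nondegenerate)
    (hlnonab : ∃ x ∈ l, ∃ y ∈ l, ⁅x, y⁆ ≠ (0 : g))
    (hZl : ∀ x ∈ centerIn g l.toSubmodule, ∀ y ∈ centerIn g l.toSubmodule, B x y = 0)
    (A : g ≃ₗ⁅ℂ⁆ g') :
    ∃ z' l' : Submodule ℂ g',
      z' = z.toSubmodule.map A.toLinearEquiv.toLinearMap ∧
      l' = orthogonalOf g' B' z' ∧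
      (∀ x ∈ z', ∀ y : g', ⁅x, y⁆ = (0 : g')) ∧
      z' ⊓ l' = ⊥ ∧ z' ⊔ l' = ⊤ ∧
      (∀ x ∈ centerIn g' l', ∀ y ∈ centerIn g' l', B' x y = 0) ∧
      (∃ φ : g →ₗ[ℂ] g',
        Set.InjOn φ l.toSubmodule ∧
        l.toSubmodule.map φ = l' ∧
        (∀ x ∈ l, ∀ y ∈ l, φ ⁅x, y⁆ = ⁅φ x, φ y⁆)) ∧
      ((∀ x y : g, B' (A x) (A y) = B x y) →
        ∃ φ : g →ₗ[ℂ] g',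
          Set.InjOn φ l.toSubmodule ∧
          l.toSubmodule.map φ = l' ∧
          (∀ x ∈ l, ∀ y ∈ l, φ ⁅x, y⁆ = ⁅φ x, φ y⁆) ∧
          (∀ x ∈ l, ∀ y ∈ l, B' (φ x) (φ y) = B x y)) := by
  classical
  set Ae : g ≃ₗ[ℂ] g' := A.toLinearEquiv with hAe
  have hAapp : ∀ x : g, Ae.toLinearMap x = A x := fun _ => rfl
  have hAbr : ∀ a b : g, A ⁅a, b⁆ = ⁅A a, A b⁆ := fun a b => A.toLieHom.map_lie a b
  have hA0 : A (0 : g) = 0 := A.toLieHom.map_zero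
  set z' : Submodule ℂ g' := z.toSubmodule.map Ae.toLinearMap with hz'def
  set l' : Submodule ℂ g' := orthogonalOf g' B' z' with hl'def
  -- centrality of z'
  have hzcent : ∀ x ∈ z.toSubmodule, ∀ y : g, ⁅x, y⁆ = 0 := by
    intro x hx y
    have hxz : x ∈ z := hx
    have := hzc hxz
    rw [LieAlgebra.center, LieModule.mem_maxTrivSubmodule] at this
    rw [← lie_skew, this y, neg_zero]
  have hc : ∀ x ∈ z', ∀ y : g', ⁅x, y⁆ = (0 : g') := by
    rintro x ⟨w, hw, rfl⟩ y
    have : ⁅A w, y⁆ = A ⁅w, A.symm y⁆ := by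
      rw [hAbr]; simp
    rw [hAapp, this, hzcent w hw, hA0]
  -- derived subalgebras and centers
  set Dg : Submodule ℂ g := Submodule.span ℂ {x : g | ∃ a b : g, ⁅a, b⁆ = x} with hDg
  set D' : Submodule ℂ g' := Submodule.span ℂ {x : g' | ∃ a b : g', ⁅a, b⁆ = x} with hD'
  set C : Submodule ℂ g' := centerIn g' ⊤ with hC
  set Cg : Submodule ℂ g := centerIn g ⊤ with hCg
  set Zl : Submodule ℂ g := centerIn g l.toSubmodule with hZldef
  have hmemC : ∀ x : g', x ∈ C ↔ ∀ y : g', ⁅x, y⁆ = 0 := by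
    intro x
    constructor
    · exact fun h y => h.2 y trivial
    · exact fun h => ⟨trivial, fun y _ => h y⟩
  -- D' = A(Dg)
  have hD'A : D' = Dg.map Ae.toLinearMap := by
    rw [hDg, Submodule.map_span, hD']
    congr 1
    ext x
    constructor
    · rintro ⟨a, b, rfl⟩
      exact ⟨⁅A.symm a, A.symm b⁆, ⟨A.symm a, A.symm b, rfl⟩, by
        rw [hAapp, hAbr]; simp⟩
    · rintro ⟨w, ⟨a, b, rfl⟩, rfl⟩
      exact ⟨A a, A b, (hAbr a b).symm.trans (hAapp _).symm⟩
  -- C = A(Cg)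
  have hCA : C = Cg.map Ae.toLinearMap := by
    ext x
    constructor
    · intro hx
      refine ⟨A.symm x, ⟨trivial, fun y _ => ?_⟩, by rw [hAapp]; simp⟩
      have h1 : A ⁅A.symm x, y⁆ = ⁅x, A y⁆ := by
        rw [hAbr]; simp
      have h0 : ⁅x, A y⁆ = 0 := (hmemC x).1 hx (A y)
      have h2 : A ⁅A.symm x, y⁆ = A 0 := by rw [h1, h0, hA0]
      exact A.injective h2
    · rintro ⟨w, hw, rfl⟩
      refine (hmemC _).2 fun y => ?_
      rw [hAapp, show ⁅A w, y⁆ = A ⁅w, A.symm y⁆ by rw [hAbr]; simp,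
        hw.2 _ trivial, hA0]
  -- Cg = z ⊔ Zl
  have hCgdecomp : Cg = z.toSubmodule ⊔ Zl := by
    ext x
    constructor
    · intro hx
      obtain ⟨u, hu, v, hv, huv⟩ := Submodule.mem_sup.1
        (by rw [hsup]; exact Submodule.mem_top : x ∈ z.toSubmodule ⊔ l.toSubmodule)
      have hvcen : v ∈ Zl := by
        refine ⟨hv, fun y hy => ?_⟩
        have : ⁅x, y⁆ = 0 := hx.2 y trivial
        have hu0 : ⁅u, y⁆ = 0 := hzcent u hu y
        have : ⁅u, y⁆ + ⁅v, y⁆ = 0 := by rw [← add_lie, huv]; exact this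
        rw [hu0, zero_add] at this
        exact this
      rw [← huv]
      exact Submodule.add_mem_sup hu hvcen
    · intro hx
      refine ⟨trivial, fun y _ => ?_⟩
      obtain ⟨u, hu, w, hw, rfl⟩ := Submodule.mem_sup.1 hx
      obtain ⟨a, ha, b, hb, rfl⟩ := Submodule.mem_sup.1
        (by rw [hsup]; exact Submodule.mem_top : y ∈ z.toSubmodule ⊔ l.toSubmodule)
      have h1 : ⁅u, a + b⁆ = 0 := hzcent u hu _
      have h2 : ⁅w, a⁆ = 0 := by
        rw [← lie_skew, hzcent a ha w, neg_zero]
      have h3 : ⁅w, b⁆ = 0 := hw.2 b hb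
      rw [add_lie, h1, lie_add, h2, h3, add_zero, zero_add]
  -- Zl ≤ Dg
  have hZlDg : Zl ≤ Dg := center_le_derived B hsymm hinv l hndl hZl
  -- Dg ≤ l
  have hDgl : Dg ≤ l.toSubmodule := by
    rw [hDg]
    apply Submodule.span_le.2
    rintro x ⟨a, b, rfl⟩
    obtain ⟨u, hu, v, hv, rfl⟩ := Submodule.mem_sup.1
      (by rw [hsup]; exact Submodule.mem_top : b ∈ z.toSubmodule ⊔ l.toSubmodule)
    have h1 : ⁅a, u⁆ = 0 := by rw [← lie_skew, hzcent u hu a, neg_zero]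
    rw [lie_add, h1, zero_add]
    exact l.lie_mem hv
  -- z ⊓ Dg = ⊥ and z' ⊓ D' = ⊥
  have hzDg : z.toSubmodule ⊓ Dg = ⊥ := by
    rw [← le_bot_iff, ← hinf]
    exact inf_le_inf_left _ hDgl
  have hz'D' : z' ⊓ D' = ⊥ := by
    rw [hz'def, hD'A, ← Submodule.map_inf Ae.toLinearMap (fun a b h => Ae.injective h), hzDg, Submodule.map_bot]
  -- C decomposition in g'
  have hCdecomp : C = z' ⊔ Zl.map Ae.toLinearMap := by
    rw [hCA, hCgdecomp, Submodule.map_sup]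
  have hz'C : z' ≤ C := by rw [hCdecomp]; exact le_sup_left
  -- C = (D')⊥ and D' = C⊥
  have hCD' : C = orthogonalOf g' B' D' := by
    ext x
    constructor
    · intro hx
      intro w hw
      have : D' ≤ LinearMap.ker (B' x) := by
        rw [hD']
        apply Submodule.span_le.2
        rintro w ⟨a, b, rfl⟩
        have : B' x ⁅a, b⁆ = 0 := by
          rw [← hinv', (hmemC x).1 hx a]; simp
        simpa [LinearMap.mem_ker] using this
      exact this hw
    · intro hx
      refine (hmemC x).2 fun a => ?_
      apply hnd'.1
      intro b
      rw [hinv']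
      exact hx _ (Submodule.subset_span ⟨a, b, rfl⟩)
  have hD'C : D' = orthogonalOf g' B' C := by
    have hle : D' ≤ orthogonalOf g' B' C := by
      rw [hD']
      apply Submodule.span_le.2
      rintro w ⟨a, b, rfl⟩
      intro y hy
      have : ⁅b, y⁆ = 0 := by
        rw [← lie_skew, (hmemC y).1 hy b, neg_zero]
      rw [hinv', this]; simp
    have h1 : Module.finrank ℂ C = Module.finrank ℂ g' - Module.finrank ℂ D' := by
      rw [hCD']; exact finrank_orthogonalOf B' hsymm' hnd' D'
    have h2 : Module.finrank ℂ (orthogonalOf g' B' C)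
        = Module.finrank ℂ g' - Module.finrank ℂ C := finrank_orthogonalOf B' hsymm' hnd' C
    have h3 : Module.finrank ℂ D' ≤ Module.finrank ℂ g' := D'.finrank_le
    have h4 : Module.finrank ℂ C ≤ Module.finrank ℂ g' := C.finrank_le
    exact Submodule.eq_of_le_of_finrank_eq hle (by omega)
  -- A(Zl) ≤ D'
  have hAZlD' : Zl.map Ae.toLinearMap ≤ D' := by
    rw [hD'A]; exact Submodule.map_mono hZlDg
  -- z' ⊓ l' = ⊥
  have hzl'bot : z' ⊓ l' = ⊥ := by
    rw [eq_bot_iff]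
    rintro x ⟨hxz, hxl⟩
    have hxC : x ∈ C := hz'C hxz
    have hxoC : x ∈ orthogonalOf g' B' C := by
      intro y hy
      rw [hCdecomp] at hy
      obtain ⟨u, hu, w, hw, rfl⟩ := Submodule.mem_sup.1 hy
      have h1 : B' x u = 0 := hxl u hu
      have h2 : B' x w = 0 := by
        rw [hsymm']
        exact (hD'C ▸ hAZlD' hw) x hxC
      rw [map_add, h1, h2, add_zero]
    have hxD' : x ∈ D' := by rw [hD'C]; exact hxoC
    have : x ∈ z' ⊓ D' := ⟨hxz, hxD'⟩
    rw [hz'D'] at this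
    exact this
  -- dimensions
  have hfz' : Module.finrank ℂ z' = Module.finrank ℂ z.toSubmodule :=
    LinearEquiv.finrank_map_eq Ae z.toSubmodule
  have hfl' : Module.finrank ℂ l' = Module.finrank ℂ g' - Module.finrank ℂ z' :=
    finrank_orthogonalOf B' hsymm' hnd' z'
  have hfz'le : Module.finrank ℂ z' ≤ Module.finrank ℂ g' := z'.finrank_le
  have hsup' : z' ⊔ l' = ⊤ := by
    apply Submodule.eq_top_of_finrank_eq
    have := Submodule.finrank_sup_add_finrank_inf_eq z' l'
    rw [hzl'bot, finrank_bot, add_zero] at this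
    omega
  -- finrank l = finrank l'
  have hgg' : Module.finrank ℂ g = Module.finrank ℂ g' := Ae.finrank_eq
  have hfl : Module.finrank ℂ z.toSubmodule + Module.finrank ℂ l.toSubmodule
      = Module.finrank ℂ g := by
    have := Submodule.finrank_sup_add_finrank_inf_eq z.toSubmodule l.toSubmodule
    rw [hinf, hsup, finrank_bot, add_zero, finrank_top] at this
    exact this.symm
  have hfll' : Module.finrank ℂ l.toSubmodule = Module.finrank ℂ l' := by omega
  -- the projection and φ
  have hcompl : IsCompl l' z' := by
    constructor
    · rw [disjoint_iff, inf_comm]; exact hzl'bot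
    · rw [codisjoint_iff, sup_comm]; exact hsup'
  set P := Submodule.linearProjOfIsCompl l' z' hcompl with hP
  set φ : g →ₗ[ℂ] g' := l'.subtype ∘ₗ (P ∘ₗ Ae.toLinearMap) with hφ
  have hφmem : ∀ x : g, φ x ∈ l' := fun x => (P (Ae.toLinearMap x)).2
  have hφdiff : ∀ x : g, A x - φ x ∈ z' := by
    intro x
    have : P (A x - φ x) = 0 := by
      have h1 : φ x ∈ l' := hφmem x
      have : P (φ x) = ⟨φ x, h1⟩ := Submodule.linearProjOfIsCompl_apply_left hcompl ⟨φ x, h1⟩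
      rw [map_sub, this]
      have : P (A x) = ⟨φ x, h1⟩ := rfl
      rw [this, sub_self]
    have hk := Submodule.linearProjOfIsCompl_ker hcompl
    exact hk ▸ (LinearMap.mem_ker.2 this)
  have hD'l' : D' ≤ l' := by
    rw [hD'C, hl'def]
    exact orthogonalOf_anti B' hz'C
  have hφbr : ∀ x y : g, φ ⁅x, y⁆ = ⁅φ x, φ y⁆ := by
    intro x y
    have hbr : A ⁅x, y⁆ = ⁅A x, A y⁆ := hAbr x y
    have hmem : A ⁅x, y⁆ ∈ l' := by
      rw [hbr]; exact hD'l' (Submodule.subset_span ⟨A x, A y, rfl⟩)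
    have h1 : φ ⁅x, y⁆ = A ⁅x, y⁆ := by
      show ((P (A ⁅x, y⁆)) : g') = A ⁅x, y⁆
      rw [show P (A ⁅x, y⁆) = ⟨A ⁅x,y⁆, hmem⟩ from
        Submodule.linearProjOfIsCompl_apply_left hcompl ⟨A ⁅x,y⁆, hmem⟩]
    have h2 : ⁅A x, A y⁆ = ⁅φ x, φ y⁆ := by
      have e1 : ⁅A x, A y⁆ - ⁅φ x, A y⁆ = ⁅A x - φ x, A y⁆ := by rw [sub_lie]
      have e2 : ⁅A x - φ x, A y⁆ = 0 := hc _ (hφdiff x) _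
      have e3 : ⁅φ x, A y⁆ - ⁅φ x, φ y⁆ = ⁅φ x, A y - φ y⁆ := by rw [lie_sub]
      have e4 : ⁅φ x, A y - φ y⁆ = 0 := by
        rw [← lie_skew, hc _ (hφdiff y) _, neg_zero]
      have := sub_eq_zero.1 (e1.trans e2)
      rw [this]
      exact sub_eq_zero.1 (e3.trans e4)
    rw [h1, hbr, h2]
  have hφker : ∀ x ∈ l.toSubmodule, φ x = 0 → x = 0 := by
    intro x hx h0
    have hAx : A x ∈ z' := by
      have := hφdiff x
      rwa [h0, sub_zero] at this
    obtain ⟨w, hw, hwx⟩ := hAx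
    have : w = x := A.injective hwx
    subst this
    have : w ∈ z.toSubmodule ⊓ l.toSubmodule := ⟨hw, hx⟩
    rw [hinf] at this
    exact this
  have hφinj : Set.InjOn φ l.toSubmodule := by
    intro x hx y hy hxy
    have hsub : x - y ∈ l.toSubmodule := Submodule.sub_mem _ hx hy
    have : φ (x - y) = 0 := by rw [map_sub, hxy, sub_self]
    have := hφker _ hsub this
    exact sub_eq_zero.1 this
  have hφmap : l.toSubmodule.map φ = l' := by
    have hle : l.toSubmodule.map φ ≤ l' := by
      rintro x ⟨w, hw, rfl⟩
      exact hφmem w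
    have hker : LinearMap.ker (φ.domRestrict l.toSubmodule) = ⊥ := by
      rw [LinearMap.ker_eq_bot']
      intro m hm
      have := hφker m m.2 hm
      exact Subtype.ext this
    have hrange : LinearMap.range (φ.domRestrict l.toSubmodule) = l.toSubmodule.map φ :=
      LinearMap.range_domRestrict l.toSubmodule φ
    have := LinearMap.finrank_range_add_finrank_ker (φ.domRestrict l.toSubmodule)
    rw [hker, finrank_bot, add_zero, hrange] at this
    exact Submodule.eq_of_le_of_finrank_eq hle (by rw [this, hfll'])
  -- center of l' is totally isotropic
  have hZ'D' : centerIn g' l' ≤ D' := by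
    intro x hx
    have hxC : x ∈ C := by
      refine (hmemC x).2 fun y => ?_
      obtain ⟨u, hu, w, hw, rfl⟩ := Submodule.mem_sup.1
        (by rw [hsup']; exact Submodule.mem_top : y ∈ z' ⊔ l')
      have h1 : ⁅x, u⁆ = 0 := by rw [← lie_skew, hc u hu x, neg_zero]
      have h2 : ⁅x, w⁆ = 0 := hx.2 w hw
      rw [lie_add, h1, h2, add_zero]
    rw [hCdecomp] at hxC
    obtain ⟨u, hu, w, hw, huw⟩ := Submodule.mem_sup.1 hxC
    have hwD' : w ∈ D' := hAZlD' hw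
    have hwl' : w ∈ l' := hD'l' hwD'
    have hu' : u = x - w := by rw [← huw]; abel
    have huz : u ∈ z' ⊓ l' := ⟨hu, by rw [hu']; exact Submodule.sub_mem _ hx.1 hwl'⟩
    rw [hzl'bot] at huz
    have : u = 0 := huz
    rw [← huw, this, zero_add]
    exact hwD'
  have hZ'iso : ∀ x ∈ centerIn g' l', ∀ y ∈ centerIn g' l', B' x y = 0 := by
    intro x hx y hy
    have hxD' : x ∈ orthogonalOf g' B' C := hD'C ▸ hZ'D' hx
    have hyC : y ∈ C := by
      refine (hmemC y).2 fun w => ?_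
      obtain ⟨u, hu, v, hv, rfl⟩ := Submodule.mem_sup.1
        (by rw [hsup']; exact Submodule.mem_top : w ∈ z' ⊔ l')
      have h1 : ⁅y, u⁆ = 0 := by rw [← lie_skew, hc u hu y, neg_zero]
      have h2 : ⁅y, v⁆ = 0 := hy.2 v hv
      rw [lie_add, h1, h2, add_zero]
    exact hxD' y hyC
  -- assemble
  refine ⟨z', l', rfl, rfl, hc, hzl'bot, hsup', hZ'iso,
    ⟨φ, hφinj, hφmap, fun x _ y _ => hφbr x y⟩, ?_⟩
  intro hiso
  refine ⟨φ, hφinj, hφmap, fun x _ y _ => hφbr x y, ?_⟩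
  intro x hx y hy
  have h1 : B' (φ x) (φ y) = B' (A x) (φ y) := by
    have : B' (A x) (φ y) - B' (φ x) (φ y) = B' (A x - φ x) (φ y) := by
      rw [map_sub]; simp
    have h0 : B' (A x - φ x) (φ y) = 0 := by
      rw [hsymm']
      exact hφmem y _ (hφdiff x)
    have := sub_eq_zero.1 (this.trans h0)
    exact this.symm
  have h2 : B' (A x) (φ y) = B' (A x) (A y) := by
    have : B' (A x) (A y) - B' (A x) (φ y) = B' (A x) (A y - φ y) := by
      rw [map_sub]
    have h0 : B' (A x) (A y - φ y) = 0 := by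
      obtain ⟨w, hw, hwe⟩ := hφdiff y
      rw [← hwe, hAapp, hiso, hsymm]
      exact horth w hw x hx
    exact (sub_eq_zero.1 (this.trans h0)).symm
  rw [h1, h2, hiso]
end

section
/- Let (g,B) be a non-Abelian quadratic Lie algebra. Then dim([g,g]) ≥ 3. -/
open Module

/-- The set of elements whose bracket with everything vanishes, as a submodule. -/
def centerS (g : Type) [LieRing g] [LieAlgebra ℂ g] : Submodule ℂ g where
  carrier := {z | ∀ x : g, ⁅z, x⁆ = 0}
  add_mem' := by intro a b ha hb x; rw [Set.mem_setOf_eq] at *; rw [add_lie, ha, hb, add_zero]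
  zero_mem' := fun x => zero_lie x
  smul_mem' := by intro c a ha x; rw [Set.mem_setOf_eq] at *; rw [smul_lie, ha, smul_zero]

lemma mem_centerS {g : Type} [LieRing g] [LieAlgebra ℂ g] {z : g} :
    z ∈ centerS g ↔ ∀ x : g, ⁅z, x⁆ = 0 := Iff.rfl

/-- Key step: if the derived ideal has dimension at most `k`, then it is contained in the
span of brackets of `k` fixed elements. -/
lemma derived_le_span_brackets (g : Type) [LieRing g] [LieAlgebra ℂ g]
    [FiniteDimensional ℂ g]
    (B : LinearMap.BilinForm ℂ g)
    (hnd : B.Nondegenerate)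
    (hinv : ∀ x y z : g, B ⁅x, y⁆ z = B x ⁅y, z⁆) (k : ℕ)
    (hk : finrank ℂ ↥(⁅(⊤ : LieIdeal ℂ g), (⊤ : LieIdeal ℂ g)⁆ : LieIdeal ℂ g).toSubmodule ≤ k) :
    ∃ v : Fin k → g,
      (⁅(⊤ : LieIdeal ℂ g), (⊤ : LieIdeal ℂ g)⁆ : LieIdeal ℂ g).toSubmodule ≤
        Submodule.span ℂ {m | ∃ i j : Fin k, ⁅v i, v j⁆ = m} := by
  set D : Submodule ℂ g :=
    (⁅(⊤ : LieIdeal ℂ g), (⊤ : LieIdeal ℂ g)⁆ : LieIdeal ℂ g).toSubmodule with hD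
  -- the map sending z to the functional d ↦ B z d on D
  set f : g →ₗ[ℂ] Module.Dual ℂ D := (D.subtype.dualMap).comp B with hf
  have hker : LinearMap.ker f ≤ centerS g := by
    intro z hz
    rw [LinearMap.mem_ker] at hz
    rw [mem_centerS]
    intro x
    apply hnd.1
    intro w
    rw [hinv]
    have hmem : ⁅x, w⁆ ∈ D :=
      LieSubmodule.lie_mem_lie (LieSubmodule.mem_top x) (LieSubmodule.mem_top w)
    have := LinearMap.congr_fun hz ⟨⁅x, w⁆, hmem⟩
    simpa [hf] using this
  have hrank : finrank ℂ (centerS g) + k ≥ finrank ℂ g := by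
    have h1 := LinearMap.finrank_range_add_finrank_ker f
    have h2 : finrank ℂ (LinearMap.range f) ≤ finrank ℂ (Module.Dual ℂ D) :=
      Submodule.finrank_le _
    have h3 : finrank ℂ (Module.Dual ℂ D) = finrank ℂ D := Subspace.dual_finrank_eq
    have h4 : finrank ℂ (LinearMap.ker f) ≤ finrank ℂ (centerS g) :=
      Submodule.finrank_mono hker
    omega
  obtain ⟨W, hW⟩ := Submodule.exists_isCompl (centerS g)
  have h5 : finrank ℂ (centerS g) + finrank ℂ W = finrank ℂ g :=
    Submodule.finrank_add_eq_of_isCompl hW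
  have hWk : finrank ℂ W ≤ k := by omega
  set bW := Module.finBasis ℂ W with hbW
  refine ⟨fun i => if h : (i : ℕ) < finrank ℂ W then (bW ⟨i, h⟩ : g) else 0, ?_⟩
  set v : Fin k → g := fun i => if h : (i : ℕ) < finrank ℂ W then (bW ⟨i, h⟩ : g) else 0 with hv
  set T : Submodule ℂ g := Submodule.span ℂ {m | ∃ i j : Fin k, ⁅v i, v j⁆ = m} with hT
  -- W is contained in the span of the range of v
  have hWle : W ≤ Submodule.span ℂ (Set.range v) := by
    intro w hw
    have hmem : (⟨w, hw⟩ : W) ∈ Submodule.span ℂ (Set.range bW) := by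
      rw [bW.span_eq]; trivial
    have := Submodule.mem_map_of_mem (f := W.subtype) hmem
    rw [Submodule.map_span] at this
    refine Submodule.span_le.mpr ?_ this
    rintro _ ⟨_, ⟨i, rfl⟩, rfl⟩
    apply Submodule.subset_span
    refine ⟨⟨(i : ℕ), lt_of_lt_of_le i.2 hWk⟩, ?_⟩
    simp [hv]
  -- brackets of elements of span (range v) lie in T
  have key1 : ∀ i : Fin k, ∀ b ∈ Submodule.span ℂ (Set.range v), ⁅v i, b⁆ ∈ T := by
    intro i b hb
    refine Submodule.span_induction (p := fun b _ => ⁅v i, b⁆ ∈ T) ?_ ?_ ?_ ?_ hb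
    · rintro _ ⟨j, rfl⟩; exact Submodule.subset_span ⟨i, j, rfl⟩
    · simp only [lie_zero]; exact Submodule.zero_mem _
    · intro a b _ _ ha hb; rw [lie_add]; exact Submodule.add_mem _ ha hb
    · intro c a _ ha; rw [lie_smul]; exact Submodule.smul_mem _ c ha
  have key2 : ∀ a ∈ Submodule.span ℂ (Set.range v), ∀ b ∈ Submodule.span ℂ (Set.range v),
      ⁅a, b⁆ ∈ T := by
    intro a ha b hb
    refine Submodule.span_induction (p := fun a _ => ⁅a, b⁆ ∈ T) ?_ ?_ ?_ ?_ ha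
    · rintro _ ⟨i, rfl⟩; exact key1 i b hb
    · simp only [zero_lie]; exact Submodule.zero_mem _
    · intro a a' _ _ h1 h2; rw [add_lie]; exact Submodule.add_mem _ h1 h2
    · intro c a _ h1; rw [smul_lie]; exact Submodule.smul_mem _ c h1
  -- now show D ≤ T
  rw [hD, LieSubmodule.lieIdeal_oper_eq_linear_span']
  rw [Submodule.span_le]
  rintro _ ⟨x, -, y, -, rfl⟩
  have hx : x ∈ centerS g ⊔ W := by rw [hW.codisjoint.eq_top]; trivial
  have hy : y ∈ centerS g ⊔ W := by rw [hW.codisjoint.eq_top]; trivial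
  obtain ⟨z1, hz1, w1, hw1, rfl⟩ := Submodule.mem_sup.mp hx
  obtain ⟨z2, hz2, w2, hw2, rfl⟩ := Submodule.mem_sup.mp hy
  have e : ⁅z1 + w1, z2 + w2⁆ = ⁅w1, w2⁆ := by
    have h2 : ⁅w1, z2⁆ = 0 := by
      rw [← lie_skew, (mem_centerS.mp hz2) w1, neg_zero]
    rw [add_lie, (mem_centerS.mp hz1) (z2 + w2), lie_add, h2]
    abel
  show ⁅z1 + w1, z2 + w2⁆ ∈ T
  rw [e]
  exact key2 w1 (hWle hw1) w2 (hWle hw2)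

/-- Let `(g, B)` be a non-Abelian quadratic Lie algebra.  Then `dim [g, g] ≥ 3`. -/
theorem derived_dim_ge_three (g : Type) [LieRing g] [LieAlgebra ℂ g]
    [FiniteDimensional ℂ g]
    (B : LinearMap.BilinForm ℂ g)
    (hsymm : ∀ x y : g, B x y = B y x)
    (hnd : B.Nondegenerate)
    (hinv : ∀ x y z : g, B ⁅x, y⁆ z = B x ⁅y, z⁆)
    (hnonab : ¬ IsLieAbelian g) :
    3 ≤ finrank ℂ ↥(⁅(⊤ : LieIdeal ℂ g), (⊤ : LieIdeal ℂ g)⁆ : LieIdeal ℂ g).toSubmodule := by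
  by_contra hlt
  push_neg at hlt
  have h2 : finrank ℂ ↥(⁅(⊤ : LieIdeal ℂ g), (⊤ : LieIdeal ℂ g)⁆ : LieIdeal ℂ g).toSubmodule
      ≤ 2 := by omega
  obtain ⟨v, hv⟩ := derived_le_span_brackets g B hnd hinv 2 h2
  have hT1 : Submodule.span ℂ {m | ∃ i j : Fin 2, ⁅v i, v j⁆ = m} ≤ ℂ ∙ ⁅v 0, v 1⁆ := by
    rw [Submodule.span_le]
    rintro _ ⟨i, j, rfl⟩
    simp only [SetLike.mem_coe]
    fin_cases i <;> fin_cases j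
    · rw [lie_self]; exact Submodule.zero_mem _
    · apply Submodule.mem_span_singleton_self
    · show ⁅v 1, v 0⁆ ∈ Submodule.span ℂ {⁅v 0, v 1⁆}
      rw [show (⁅v 1, v 0⁆ : g) = -⁅v 0, v 1⁆ by rw [← lie_skew (v 1) (v 0)]]
      apply Submodule.neg_mem
      apply Submodule.mem_span_singleton_self
    · rw [lie_self]; exact Submodule.zero_mem _
  have hspan1 : finrank ℂ (ℂ ∙ ⁅v 0, v 1⁆) ≤ 1 := by
    rcases eq_or_ne (⁅v 0, v 1⁆ : g) 0 with h | h
    · rw [h, Submodule.span_zero_singleton]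
      simp
    · rw [finrank_span_singleton h]
  have hd1 : finrank ℂ ↥(⁅(⊤ : LieIdeal ℂ g), (⊤ : LieIdeal ℂ g)⁆ : LieIdeal ℂ g).toSubmodule
      ≤ 1 := le_trans (Submodule.finrank_mono (le_trans hv hT1)) hspan1
  obtain ⟨v', hv'⟩ := derived_le_span_brackets g B hnd hinv 1 hd1
  have hbot : (⁅(⊤ : LieIdeal ℂ g), (⊤ : LieIdeal ℂ g)⁆ : LieIdeal ℂ g).toSubmodule
      ≤ ⊥ := by
    refine le_trans hv' ?_
    rw [Submodule.span_le]
    rintro _ ⟨i, j, rfl⟩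
    fin_cases i <;> fin_cases j
    simp
  exact hnonab ⟨fun x y => by
    have hmem : ⁅x, y⁆ ∈ (⁅(⊤ : LieIdeal ℂ g), (⊤ : LieIdeal ℂ g)⁆ : LieIdeal ℂ g) :=
      LieSubmodule.lie_mem_lie (LieSubmodule.mem_top x) (LieSubmodule.mem_top y)
    exact Submodule.mem_bot ℂ |>.mp (hbot hmem)⟩
end

section
/- Let (g,B) be a solvable quadratic Lie algebra with dim(g) ≤ 3. Then g is Abelian. -/
open Module

/-- Let `(g, B)` be a solvable quadratic Lie algebra with `dim g ≤ 3`.  Then `g` is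
Abelian. -/
theorem solvable_quadratic_dim_le_three_abelian (g : Type) [LieRing g] [LieAlgebra ℂ g]
    [FiniteDimensional ℂ g]
    (B : LinearMap.BilinForm ℂ g)
    (hsymm : ∀ x y : g, B x y = B y x)
    (hnd : B.Nondegenerate)
    (hinv : ∀ x y z : g, B ⁅x, y⁆ z = B x ⁅y, z⁆)
    (hsolv : LieAlgebra.IsSolvable g)
    (hdim : finrank ℂ g ≤ 3) :
    IsLieAbelian g := by
  rcases subsingleton_or_nontrivial g with hs | hnt
  · exact ⟨fun x y => Subsingleton.elim _ _⟩
  classical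
  haveI := hsolv
  set I : LieIdeal ℂ g := LieAlgebra.derivedSeries ℂ g 1 with hIdef
  set D : Submodule ℂ g := LieSubmodule.toSubmodule I with hDdef
  have hrefl : B.IsRefl := fun x y h => by rw [hsymm]; exact h
  have hItop : I = ⁅(⊤ : LieIdeal ℂ g), (⊤ : LieIdeal ℂ g)⁆ := by
    rw [hIdef, LieAlgebra.derivedSeries_def, LieAlgebra.derivedSeriesOfIdeal_succ,
      LieAlgebra.derivedSeriesOfIdeal_zero]
  have hDspan : D = Submodule.span ℂ
      {m : g | ∃ x ∈ (⊤ : LieIdeal ℂ g), ∃ y ∈ (⊤ : LieIdeal ℂ g), ⁅x, y⁆ = m} := by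
    rw [hDdef, hItop, LieSubmodule.lieIdeal_oper_eq_linear_span']
  have hbr : ∀ x y : g, ⁅x, y⁆ ∈ D := fun x y => by
    rw [hDspan]; exact Submodule.subset_span ⟨x, trivial, y, trivial, rfl⟩
  set z : Submodule ℂ g := B.orthogonal D with hzdef
  have hzmem : ∀ x : g, x ∈ z ↔ ∀ y : g, ⁅y, x⁆ = 0 := by
    intro x
    constructor
    · intro hx y
      apply hnd.1
      intro a
      rw [hsymm, ← hinv a y x]
      exact hx _ (hbr a y)
    · intro hx
      have hker : ∀ n ∈ D, B n x = 0 := by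
        intro n hn
        rw [hDspan] at hn
        induction hn using Submodule.span_induction with
        | mem m hm =>
          obtain ⟨a, -, b, -, rfl⟩ := hm
          rw [hinv, hx b, map_zero]
        | zero => rw [map_zero, LinearMap.zero_apply]
        | add n₁ n₂ _ _ h₁ h₂ => rw [map_add, LinearMap.add_apply, h₁, h₂, add_zero]
        | smul c n _ h => rw [map_smul, LinearMap.smul_apply, h, smul_zero]
      intro n hn
      exact hker n hn
  have hzfin : finrank ℂ z = finrank ℂ g - finrank ℂ D :=
    LinearMap.BilinForm.finrank_orthogonal hnd D
  have hDne : D ≠ ⊤ := by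
    intro h
    exact (ne_of_lt (LieAlgebra.derivedSeries_lt_top_of_solvable (R := ℂ) (L := g)))
      ((LieSubmodule.toSubmodule_eq_top _).mp h)
  have hDlt : finrank ℂ D < finrank ℂ g :=
    Submodule.finrank_lt hDne
  rcases lt_or_ge (finrank ℂ D) 2 with hd1 | hd2
  · -- dim D ≤ 1 : quotient by the "center" z has dimension ≤ 1
    constructor
    intro x y
    have hq : finrank ℂ (g ⧸ z) ≤ 1 := by
      have h1 := Submodule.finrank_quotient_add_finrank z
      omega
    obtain ⟨v, hv⟩ := finrank_le_one_iff.mp hq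
    obtain ⟨s, hs⟩ := hv (Submodule.Quotient.mk x)
    obtain ⟨t, ht⟩ := hv (Submodule.Quotient.mk y)
    have hw : t • x - s • y ∈ z := by
      have h0 : z.mkQ (t • x - s • y) = 0 := by
        rw [map_sub, map_smul, map_smul, Submodule.mkQ_apply, Submodule.mkQ_apply,
          ← hs, ← ht, smul_smul, smul_smul, mul_comm, sub_self]
      rwa [Submodule.mkQ_apply, Submodule.Quotient.mk_eq_zero] at h0
    have h0 : ⁅x, t • x - s • y⁆ = 0 := (hzmem _).mp hw x
    by_cases hs0 : s = 0
    · have hxz : x ∈ z := by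
        have : z.mkQ x = 0 := by
          rw [Submodule.mkQ_apply, ← hs, hs0, zero_smul]
        rwa [Submodule.mkQ_apply, Submodule.Quotient.mk_eq_zero] at this
      rw [← lie_skew, (hzmem _).mp hxz y, neg_zero]
    · simp only [lie_sub, lie_smul, lie_self, smul_zero, zero_sub, neg_eq_zero] at h0
      exact (smul_eq_zero.mp h0).resolve_left hs0
  · -- dim D = 2, dim g = 3, dim z = 1
    exfalso
    have hd2' : finrank ℂ D = 2 := by omega
    have hn3 : finrank ℂ g = 3 := by omega
    have hz1 : finrank ℂ z = 1 := by omega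
    by_cases hzD : z ≤ D
    · -- center inside derived algebra
      obtain ⟨z0, hz0z, hz0⟩ := Submodule.exists_mem_ne_zero_of_ne_bot
        (p := z) (by intro h; rw [h, finrank_bot] at hz1; omega)
      obtain ⟨d0, hd0D, hd0z⟩ := SetLike.not_le_iff_exists.mp
        (show ¬ D ≤ z by intro h; have := Submodule.finrank_mono h; omega)
      obtain ⟨x0, -, hx0D⟩ := SetLike.not_le_iff_exists.mp
        (show ¬ (⊤ : Submodule ℂ g) ≤ D from fun h => hDne (top_le_iff.mp h))
      set W1 : Submodule ℂ g := z ⊔ Submodule.span ℂ {d0} with hW1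
      set W2 : Submodule ℂ g := W1 ⊔ Submodule.span ℂ {x0} with hW2
      have hW1D : W1 ≤ D := sup_le hzD (Submodule.span_le.mpr (by simpa using hd0D))
      have hlt1 : z < W1 := SetLike.lt_iff_le_and_exists.mpr
        ⟨le_sup_left, d0, Submodule.mem_sup_right (Submodule.mem_span_singleton_self d0), hd0z⟩
      have hlt2 : W1 < W2 := SetLike.lt_iff_le_and_exists.mpr
        ⟨le_sup_left, x0, Submodule.mem_sup_right (Submodule.mem_span_singleton_self x0),
          fun h => hx0D (hW1D h)⟩
      have hf1 : 2 ≤ finrank ℂ W1 := by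
        have := Submodule.finrank_lt_finrank_of_lt hlt1; omega
      have hf2 : 3 ≤ finrank ℂ W2 := by
        have := Submodule.finrank_lt_finrank_of_lt hlt2; omega
      have hW2top : W2 = ⊤ := Submodule.eq_top_of_finrank_eq (by
        have := Submodule.finrank_le W2; omega)
      have hdec : ∀ a : g, ∃ (α δ : ℂ) (u : g), u ∈ z ∧ a = α • x0 + δ • d0 + u := by
        intro a
        have ha : a ∈ W2 := hW2top ▸ Submodule.mem_top
        rw [hW2, Submodule.mem_sup] at ha
        obtain ⟨w1, hw1, w, hw, rfl⟩ := ha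
        rw [hW1, Submodule.mem_sup] at hw1
        obtain ⟨u, hu, v, hv, rfl⟩ := hw1
        obtain ⟨δ, rfl⟩ := Submodule.mem_span_singleton.mp hv
        obtain ⟨α, rfl⟩ := Submodule.mem_span_singleton.mp hw
        exact ⟨α, δ, u, hu, by abel⟩
      have hbrs : ∀ a b : g, ⁅a, b⁆ ∈ Submodule.span ℂ {(⁅x0, d0⁆ : g)} := by
        intro a b
        obtain ⟨α, δ, u, hu, rfl⟩ := hdec a
        obtain ⟨β, ε, v, hv, rfl⟩ := hdec b
        have hu1 : ∀ w : g, ⁅w, u⁆ = 0 := (hzmem u).mp hu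
        have hu2 : ∀ w : g, ⁅u, w⁆ = 0 := fun w => by rw [← lie_skew, hu1, neg_zero]
        have hv1 : ∀ w : g, ⁅w, v⁆ = 0 := (hzmem v).mp hv
        have hv2 : ∀ w : g, ⁅v, w⁆ = 0 := fun w => by rw [← lie_skew, hv1, neg_zero]
        rw [Submodule.mem_span_singleton]
        refine ⟨α * ε - δ * β, ?_⟩
        simp only [lie_add, add_lie, lie_smul, smul_lie, lie_self, hu1, hu2, hv1, hv2,
          smul_zero, add_zero, zero_add, smul_smul]
        rw [show (⁅d0, x0⁆ : g) = -⁅x0, d0⁆ from neg_eq_iff_eq_neg.mp (lie_skew x0 d0)]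
        module
      have hDle : D ≤ Submodule.span ℂ {(⁅x0, d0⁆ : g)} := by
        rw [hDspan]
        exact Submodule.span_le.mpr (by rintro m ⟨a, -, b, -, rfl⟩; exact hbrs a b)
      have hmono := Submodule.finrank_mono hDle
      have hle1 : finrank ℂ (Submodule.span ℂ {(⁅x0, d0⁆ : g)}) ≤ 1 := by
        by_cases h : (⁅x0, d0⁆ : g) = 0
        · rw [h, Submodule.span_zero_singleton]; simp
        · rw [finrank_span_singleton h]
      omega
    · -- center not inside derived algebra : derived algebra is its own derived
      obtain ⟨z0, hz0z, hz0D⟩ := SetLike.not_le_iff_exists.mp hzD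
      set W : Submodule ℂ g := D ⊔ Submodule.span ℂ {z0} with hW
      have hlt : D < W := SetLike.lt_iff_le_and_exists.mpr
        ⟨le_sup_left, z0, Submodule.mem_sup_right (Submodule.mem_span_singleton_self z0), hz0D⟩
      have hWtop : W = ⊤ := Submodule.eq_top_of_finrank_eq (by
        have h1 := Submodule.finrank_lt_finrank_of_lt hlt
        have h2 := Submodule.finrank_le W
        omega)
      have hdec : ∀ a : g, ∃ a' ∈ D, ∃ γ : ℂ, a = a' + γ • z0 := by
        intro a
        have ha : a ∈ W := hWtop ▸ Submodule.mem_top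
        rw [hW, Submodule.mem_sup] at ha
        obtain ⟨a', ha', w, hw, rfl⟩ := ha
        obtain ⟨γ, rfl⟩ := Submodule.mem_span_singleton.mp hw
        exact ⟨a', ha', γ, rfl⟩
      have hz1' : ∀ w : g, ⁅w, z0⁆ = 0 := (hzmem z0).mp hz0z
      have hz2' : ∀ w : g, ⁅z0, w⁆ = 0 := fun w => by rw [← lie_skew, hz1', neg_zero]
      have hDleJ : D ≤ LieSubmodule.toSubmodule (⁅I, I⁆ : LieIdeal ℂ g) := by
        rw [hDspan]
        apply Submodule.span_le.mpr
        rintro m ⟨a, -, b, -, rfl⟩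
        obtain ⟨a', ha', γ, rfl⟩ := hdec a
        obtain ⟨b', hb', ε, rfl⟩ := hdec b
        have heq : ⁅a' + γ • z0, b' + ε • z0⁆ = ⁅a', b'⁆ := by
          simp [lie_add, add_lie, lie_smul, smul_lie, hz1', hz2']
        rw [SetLike.mem_coe, heq, LieSubmodule.mem_toSubmodule]
        exact LieSubmodule.lie_mem_lie ha' hb'
      have hJI : (⁅I, I⁆ : LieIdeal ℂ g) = I :=
        le_antisymm (LieSubmodule.lie_le_left I I)
          ((LieSubmodule.toSubmodule_le_toSubmodule _ _).mp hDleJ)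
      have hsucc : ∀ k, LieAlgebra.derivedSeries ℂ g (k + 1) =
          ⁅LieAlgebra.derivedSeries ℂ g k, LieAlgebra.derivedSeries ℂ g k⁆ := by
        intro k
        rw [LieAlgebra.derivedSeries_def, LieAlgebra.derivedSeries_def,
          LieAlgebra.derivedSeriesOfIdeal_succ]
      have hds : ∀ k, LieAlgebra.derivedSeries ℂ g (k + 1) = I := by
        intro k
        induction k with
        | zero => exact hIdef.symm
        | succ k ih => rw [hsucc (k + 1), ih, hJI]
      obtain ⟨k, hk⟩ := LieAlgebra.IsSolvable.solvable (R := ℂ) (L := g)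
      have hIbot : I = ⊥ := by
        rw [← hds k, hsucc k, hk, LieSubmodule.lie_bot]
      have hDbot : D = ⊥ := by rw [hDdef, hIbot]; exact LieSubmodule.bot_toSubmodule
      rw [hDbot, finrank_bot] at hd2'
      omega
end

section
/- Let (g,B) be a non-Abelian solvable quadratic Lie algebra with dim(g) = 4. Then there exists a basis {X, P, Q, Z} of g such that B(X,Z) = B(P,Q) = 1, B(X,Q) = B(P,Z) = 0, the subspaces spanned by {X,P} and by {Q,Z} are totally isotropic, and the Lie bracket is given by [X,P] = P, [X,Q] = −Q, [P,Q] = Z, with all other brackets of basis elements equal to zero. In other words, g is i-isomorphic to the diamond Lie algebra g_4. -/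
open Module


/-- The hyperbolic Gram matrix used below. -/
def diamondGram : Matrix (Fin 4) (Fin 4) ℂ :=
  ![![0, 0, 0, 1], ![0, 0, 1, 0], ![0, 1, 0, 0], ![1, 0, 0, 0]]

lemma diamond_basis_aux {g : Type} [AddCommGroup g] [Module ℂ g] [FiniteDimensional ℂ g]
    (hdim : finrank ℂ g = 4) (B : LinearMap.BilinForm ℂ g) (v : Fin 4 → g)
    (hGram : ∀ i j, B (v i) (v j) = diamondGram i j) :
    ∃ b : Basis (Fin 4) ℂ g, ∀ i, b i = v i := by
  have li : LinearIndependent ℂ v := by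
    rw [Fintype.linearIndependent_iff]
    intro c hc
    have key : ∀ j, (∑ i, c i * B (v i) (v j)) = 0 := by
      intro j
      have := congrArg (fun u => B u (v j)) hc
      simpa [map_sum] using this
    have k0 := key 3
    have k1 := key 2
    have k2 := key 1
    have k3 := key 0
    simp only [Fin.sum_univ_four, hGram, diamondGram] at k0 k1 k2 k3
    norm_num [Matrix.cons_val_zero, Matrix.cons_val_one, Matrix.head_cons,
      Matrix.cons_val_fin_one] at k0 k1 k2 k3
    intro i
    fin_cases i <;> simp_all
  refine ⟨basisOfLinearIndependentOfCardEqFinrank li (by simp [hdim]), fun i => ?_⟩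
  simp [coe_basisOfLinearIndependentOfCardEqFinrank]


lemma central_isotropic {g : Type} [LieRing g] [LieAlgebra ℂ g] [FiniteDimensional ℂ g]
    (B : LinearMap.BilinForm ℂ g)
    (hsymm : ∀ x y : g, B x y = B y x)
    (hnd : B.Nondegenerate)
    (hinv : ∀ x y z : g, B ⁅x, y⁆ z = B x ⁅y, z⁆)
    (hsolv : LieAlgebra.IsSolvable g)
    (hnonab : ¬ IsLieAbelian g) :
    ∃ z₀ : g, z₀ ≠ 0 ∧ (∀ y : g, ⁅z₀, y⁆ = 0) ∧ B z₀ z₀ = 0 := by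
  classical
  set I : LieIdeal ℂ g := LieAlgebra.derivedSeries ℂ g 1 with hI
  set W : Submodule ℂ g := I.toSubmodule with hW
  have hmemW : ∀ x y : g, ⁅x, y⁆ ∈ W := by
    intro x y
    exact LieSubmodule.lie_mem_lie (LieSubmodule.mem_top x) (LieSubmodule.mem_top y)
  have hcentral : ∀ z : g, (∀ v ∈ W, B v z = 0) → ∀ y : g, ⁅z, y⁆ = 0 := by
    intro z hz y
    apply hnd.1
    intro x
    rw [hinv, hsymm]
    exact hz _ (hmemW y x)
  by_cases h : ∃ z ∈ W, z ≠ 0 ∧ ∀ v ∈ W, B v z = 0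
  · obtain ⟨z₀, hz₀W, hz₀ne, hz₀⟩ := h
    exact ⟨z₀, hz₀ne, hcentral z₀ hz₀, hz₀ z₀ hz₀W⟩
  · exfalso
    push_neg at h
    have hrefl : B.IsRefl := fun x y hxy => by rw [hsymm]; exact hxy
    have hres : (B.restrict W).Nondegenerate := by
      have hrefl' : (B.restrict W).IsRefl := fun x y hxy => by
        change B y x = 0; change B x y = 0 at hxy; rw [hsymm]; exact hxy
      refine hrefl'.nondegenerate_iff_separatingLeft.mpr ?_
      intro m hm
      by_contra hne
      have := h m m.2 (fun hmz => hne (Submodule.coe_eq_zero.mp hmz))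
      obtain ⟨v, hvW, hv⟩ := this
      apply hv
      rw [hsymm]
      simpa [LinearMap.BilinForm.restrict_apply] using hm ⟨v, hvW⟩
    have hcompl := B.isCompl_orthogonal_of_restrict_nondegenerate (W := W) hrefl hres
    have hdecomp : ∀ x : g, ∃ u ∈ I, ∃ w, (∀ y : g, ⁅w, y⁆ = 0) ∧ x = u + w := by
      intro x
      have hx : x ∈ W ⊔ B.orthogonal W := by rw [hcompl.sup_eq_top]; trivial
      obtain ⟨u, hu, w, hw, hx⟩ := Submodule.mem_sup.mp hx
      refine ⟨u, hu, w, hcentral w ?_, hx.symm⟩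
      intro v hv
      exact LinearMap.BilinForm.mem_orthogonal_iff.mp hw v hv
    -- the derived series stabilizes at I
    have hID : I ≤ ⁅I, I⁆ := by
      have : (⁅(⊤ : LieIdeal ℂ g), (⊤ : LieIdeal ℂ g)⁆ : LieIdeal ℂ g) ≤ ⁅I, I⁆ := by
        rw [LieSubmodule.lie_le_iff]
        intro x _ y _
        obtain ⟨u, hu, w, hwc, rfl⟩ := hdecomp x
        obtain ⟨u', hu', w', hwc', rfl⟩ := hdecomp y
        have h1 : ⁅w, u' + w'⁆ = 0 := hwc _
        have h2 : ⁅u, w'⁆ = 0 := by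
          rw [← lie_skew, hwc' u, neg_zero]
        have : ⁅u + w, u' + w'⁆ = ⁅u, u'⁆ := by
          rw [add_lie, h1, add_zero, lie_add, h2, add_zero]
        rw [this]
        exact LieSubmodule.lie_mem_lie hu hu'
      calc I = ⁅(⊤ : LieIdeal ℂ g), (⊤ : LieIdeal ℂ g)⁆ := by
              rw [hI, LieAlgebra.derivedSeries_def, LieAlgebra.derivedSeriesOfIdeal_succ,
                LieAlgebra.derivedSeriesOfIdeal_zero]
        _ ≤ ⁅I, I⁆ := this
    have hstab : ∀ k, LieAlgebra.derivedSeries ℂ g (k + 1) = I := by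
      intro k
      induction k with
      | zero => rfl
      | succ k ih =>
        have : LieAlgebra.derivedSeries ℂ g (k + 2) = ⁅LieAlgebra.derivedSeries ℂ g (k+1),
            LieAlgebra.derivedSeries ℂ g (k+1)⁆ := by
          rw [LieAlgebra.derivedSeries_def, LieAlgebra.derivedSeriesOfIdeal_succ]
        rw [this, ih]
        exact le_antisymm (LieSubmodule.lie_le_left I I) hID
    obtain ⟨k, hk⟩ := (LieAlgebra.isSolvable_iff ℂ g).mp hsolv
    apply hnonab
    cases k with
    | zero =>
      have htriv : ∀ x : g, x = 0 := by
        intro x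
        have : x ∈ (⊥ : LieIdeal ℂ g) := hk ▸ LieSubmodule.mem_top x
        simpa using this
      exact ⟨fun x y => by rw [htriv ⁅x, y⁆]⟩
    | succ k =>
      rw [hstab k] at hk
      refine ⟨fun x y => ?_⟩
      have : ⁅x, y⁆ ∈ I := hmemW x y
      rw [hk] at this
      simpa using this


lemma hyperbolic_aux {g : Type} [LieRing g] [LieAlgebra ℂ g] [FiniteDimensional ℂ g]
    (B : LinearMap.BilinForm ℂ g)
    (hsymm : ∀ x y : g, B x y = B y x)
    (hnd : B.Nondegenerate)
    (hdim : finrank ℂ g = 4)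
    (z₀ : g) (hz₀ne : z₀ ≠ 0) (hz₀c : ∀ y : g, ⁅z₀, y⁆ = 0) (hz₀z₀ : B z₀ z₀ = 0) :
    ∃ x₀ p q : g, B x₀ z₀ = 1 ∧ B x₀ x₀ = 0 ∧ B x₀ p = 0 ∧ B x₀ q = 0 ∧
      B z₀ p = 0 ∧ B z₀ q = 0 ∧ B p p = 0 ∧ B q q = 0 ∧ B p q = 1 := by
  classical
  -- a vector pairing to 1 with z₀
  have hy : ∃ y, B z₀ y ≠ 0 := by
    by_contra hcon
    push_neg at hcon
    exact hz₀ne (hnd.1 z₀ hcon)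
  obtain ⟨y, hy⟩ := hy
  set x₁ : g := (B z₀ y)⁻¹ • y with hx₁
  have hx₁z : B x₁ z₀ = 1 := by
    rw [hx₁]
    simp only [map_smul, LinearMap.smul_apply, smul_eq_mul]
    rw [hsymm y z₀]
    field_simp
  set x₀ : g := x₁ - (B x₁ x₁ / 2) • z₀ with hx₀
  have hx₀z : B x₀ z₀ = 1 := by
    rw [hx₀]
    simp [map_sub, map_smul, hz₀z₀, hx₁z]
  have hx₀x₀ : B x₀ x₀ = 0 := by
    rw [hx₀]
    simp only [map_sub, map_smul, LinearMap.sub_apply, LinearMap.smul_apply, smul_eq_mul]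
    rw [hsymm z₀ x₁, hx₁z, hz₀z₀]
    ring
  -- the orthogonal complement W of span {x₀, z₀}, via a kernel
  set Φ : g →ₗ[ℂ] ℂ × ℂ := (B x₀).prod (B z₀) with hΦ
  have hmemK : ∀ w, w ∈ LinearMap.ker Φ ↔ (B x₀ w = 0 ∧ B z₀ w = 0) := by
    intro w
    simp [hΦ, LinearMap.mem_ker, LinearMap.prod_apply, Prod.ext_iff]
  have hKrank : 2 ≤ finrank ℂ (LinearMap.ker Φ) := by
    have h1 : finrank ℂ (LinearMap.range Φ) ≤ 2 := by
      have := Submodule.finrank_le (LinearMap.range Φ)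
      simpa using this
    have h2 := Φ.finrank_range_add_finrank_ker
    rw [hdim] at h2
    omega
  -- nondegeneracy of B on W (elementwise)
  have hWnd : ∀ w : g, B x₀ w = 0 → B z₀ w = 0 → w ≠ 0 →
      ∃ v, (B x₀ v = 0 ∧ B z₀ v = 0) ∧ B w v ≠ 0 := by
    intro w hw1 hw2 hwne
    have : ∃ y, B w y ≠ 0 := by
      by_contra hcon
      push_neg at hcon
      exact hwne (hnd.1 w hcon)
    obtain ⟨u, hu⟩ := this
    refine ⟨u - (B z₀ u) • x₀ - (B x₀ u) • z₀, ⟨?_, ?_⟩, ?_⟩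
    · simp only [map_sub, map_smul, LinearMap.sub_apply, LinearMap.smul_apply, smul_eq_mul]
      rw [hx₀x₀, hx₀z]
      ring
    · simp only [map_sub, map_smul, LinearMap.sub_apply, LinearMap.smul_apply, smul_eq_mul]
      rw [hsymm z₀ x₀, hx₀z, hz₀z₀]
      ring
    · simp only [map_sub, map_smul, LinearMap.sub_apply, LinearMap.smul_apply, smul_eq_mul]
      rw [hsymm w x₀, hw1, hsymm w z₀, hw2]
      simpa using hu
  -- a nonzero vector in W
  have hKne : ∃ w₁, (B x₀ w₁ = 0 ∧ B z₀ w₁ = 0) ∧ w₁ ≠ 0 := by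
    have : LinearMap.ker Φ ≠ ⊥ := by
      intro hbot
      rw [hbot] at hKrank
      simp at hKrank
    obtain ⟨w₁, hw₁K, hw₁ne⟩ := Submodule.exists_mem_ne_zero_of_ne_bot this
    exact ⟨w₁, (hmemK w₁).mp hw₁K, hw₁ne⟩
  obtain ⟨w₁, ⟨hw₁a, hw₁b⟩, hw₁ne⟩ := hKne
  -- an isotropic nonzero vector in W
  have hiso : ∃ p, (B x₀ p = 0 ∧ B z₀ p = 0) ∧ p ≠ 0 ∧ B p p = 0 := by
    by_cases hb1 : B w₁ w₁ = 0
    · exact ⟨w₁, ⟨hw₁a, hw₁b⟩, hw₁ne, hb1⟩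
    · -- a second, independent vector in W
      have hw2 : ∃ w₂, w₂ ∈ LinearMap.ker Φ ∧ w₂ ∉ Submodule.span ℂ {w₁} := by
        by_contra hcon
        push_neg at hcon
        have hle : LinearMap.ker Φ ≤ Submodule.span ℂ {w₁} := fun w hw => hcon w hw
        have := Submodule.finrank_mono hle
        rw [finrank_span_singleton hw₁ne] at this
        omega
      obtain ⟨w₂, hw₂K, hw₂ns⟩ := hw2
      obtain ⟨hw₂a, hw₂b⟩ := (hmemK w₂).mp hw₂K
      set u : g := w₂ - (B w₁ w₂ / B w₁ w₁) • w₁ with hu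
      have hua : B x₀ u = 0 := by
        rw [hu]; simp [map_sub, map_smul, hw₂a, hw₁a]
      have hub : B z₀ u = 0 := by
        rw [hu]; simp [map_sub, map_smul, hw₂b, hw₁b]
      have hune : u ≠ 0 := by
        intro h0
        apply hw₂ns
        have : w₂ = (B w₁ w₂ / B w₁ w₁) • w₁ := by
          have := sub_eq_zero.mp (hu ▸ h0)
          exact this
        rw [this]
        exact Submodule.smul_mem _ _ (Submodule.mem_span_singleton_self w₁)
      have hw₁u : B w₁ u = 0 := by
        rw [hu]
        simp only [map_sub, map_smul, LinearMap.sub_apply, LinearMap.smul_apply, smul_eq_mul]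
        field_simp
        ring
      by_cases hbu : B u u = 0
      · exact ⟨u, ⟨hua, hub⟩, hune, hbu⟩
      · obtain ⟨s, hs⟩ := IsAlgClosed.exists_pow_nat_eq (B w₁ w₁) (n := 2) (by norm_num)
        obtain ⟨t, ht⟩ := IsAlgClosed.exists_pow_nat_eq (B u u) (n := 2) (by norm_num)
        have hsne : s ≠ 0 := by intro h; rw [h] at hs; simp at hs; exact hb1 hs.symm
        have htne : t ≠ 0 := by intro h; rw [h] at ht; simp at ht; exact hbu ht.symm
        set p : g := t • w₁ + (s * Complex.I) • u with hp
        have huw₁ : B u w₁ = 0 := by rw [hsymm]; exact hw₁u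
        have hppz : B p p = 0 := by
          rw [hp]
          simp only [map_add, map_smul, LinearMap.add_apply, LinearMap.smul_apply, smul_eq_mul]
          rw [hw₁u, huw₁, ← hs, ← ht]
          ring_nf
          rw [Complex.I_sq]
          ring
        have hpw₁ : B p w₁ ≠ 0 := by
          rw [hp]
          simp only [map_add, map_smul, LinearMap.add_apply, LinearMap.smul_apply, smul_eq_mul]
          rw [huw₁, ← hs]
          simp only [mul_zero, add_zero]
          intro h
          rcases mul_eq_zero.mp h with h | h
          · exact htne h
          · exact hsne (by simpa using pow_eq_zero_iff (n := 2) (by norm_num) |>.mp (by simpa using h))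
        refine ⟨p, ⟨?_, ?_⟩, ?_, hppz⟩
        · rw [hp]; simp [map_add, map_smul, hw₁a, hua]
        · rw [hp]; simp [map_add, map_smul, hw₁b, hub]
        · intro h0; rw [h0] at hpw₁; simp at hpw₁
  obtain ⟨p, ⟨hpa, hpb⟩, hpne, hpp⟩ := hiso
  -- complete to a hyperbolic pair
  obtain ⟨v, ⟨hva, hvb⟩, hpv⟩ := hWnd p hpa hpb hpne
  set q : g := (B p v)⁻¹ • (v - (B v v / (2 * B p v)) • p) with hq
  have hpvsym : B v p = B p v := hsymm v p
  have hqa : B x₀ q = 0 := by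
    rw [hq]; simp [map_sub, map_smul, hva, hpa]
  have hqb : B z₀ q = 0 := by
    rw [hq]; simp [map_sub, map_smul, hvb, hpb]
  have hpq : B p q = 1 := by
    rw [hq]
    simp only [map_sub, map_smul, LinearMap.sub_apply, LinearMap.smul_apply, smul_eq_mul]
    rw [hpp]
    field_simp
    ring
  have hqq : B q q = 0 := by
    rw [hq]
    simp only [map_sub, map_smul, LinearMap.sub_apply, LinearMap.smul_apply, smul_eq_mul]
    rw [hpp, hpvsym]
    field_simp
    ring
  exact ⟨x₀, p, q, hx₀z, hx₀x₀, hpa, hqa, hpb, hqb, hpp, hqq, hpq⟩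

/-- Let `(g, B)` be a non-Abelian solvable quadratic Lie algebra of dimension `4`.  Then
there is a basis `{X, P, Q, Z}` (here `b 0 = X`, `b 1 = P`, `b 2 = Q`, `b 3 = Z`) with
`B(X,Z) = B(P,Q) = 1` and all other values of `B` on basis pairs zero (in particular the
spans of `{X, P}` and `{Q, Z}` are totally isotropic), and brackets `[X,P] = P`,
`[X,Q] = -Q`, `[P,Q] = Z`, all other brackets of basis elements zero; i.e. `g` is
i-isomorphic to the diamond Lie algebra `g₄`. -/
theorem solvable_quadratic_dim_four (g : Type) [LieRing g] [LieAlgebra ℂ g]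
    [FiniteDimensional ℂ g]
    (B : LinearMap.BilinForm ℂ g)
    (hsymm : ∀ x y : g, B x y = B y x)
    (hnd : B.Nondegenerate)
    (hinv : ∀ x y z : g, B ⁅x, y⁆ z = B x ⁅y, z⁆)
    (hsolv : LieAlgebra.IsSolvable g)
    (hnonab : ¬ IsLieAbelian g)
    (hdim : finrank ℂ g = 4) :
    ∃ b : Basis (Fin 4) ℂ g,
      (∀ i j, B (b i) (b j) =
        ![![0, 0, 0, 1],
          ![0, 0, 1, 0],
          ![0, 1, 0, 0],
          ![1, 0, 0, 0]] i j) ∧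
      (∀ i j, ⁅b i, b j⁆ =
        ![![0, b 1, -(b 2), 0],
          ![-(b 1), 0, b 3, 0],
          ![b 2, -(b 3), 0, 0],
          ![(0 : g), 0, 0, 0]] i j) := by
  obtain ⟨z₀, hz₀ne, hz₀c, hz₀z₀⟩ := central_isotropic B hsymm hnd hinv hsolv hnonab
  obtain ⟨x₀, p, q, hx₀z, hx₀x₀, hx₀p, hx₀q, hz₀p, hz₀q, hpp, hqq, hpq⟩ :=
    hyperbolic_aux B hsymm hnd hdim z₀ hz₀ne hz₀c hz₀z₀
  classical
  -- symmetric copies of the Gram facts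
  have hpx₀ : B p x₀ = 0 := by rw [hsymm]; exact hx₀p
  have hqx₀ : B q x₀ = 0 := by rw [hsymm]; exact hx₀q
  have hpz₀ : B p z₀ = 0 := by rw [hsymm]; exact hz₀p
  have hqz₀ : B q z₀ = 0 := by rw [hsymm]; exact hz₀q
  have hqp : B q p = 1 := by rw [hsymm]; exact hpq
  have hz₀x : B z₀ x₀ = 1 := by rw [hsymm]; exact hx₀z
  -- central z₀ on the right
  have hz₀c' : ∀ y : g, ⁅y, z₀⁆ = 0 := fun y => by rw [← lie_skew, hz₀c, neg_zero]
  -- preliminary basis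
  obtain ⟨b, hb⟩ := diamond_basis_aux hdim B ![x₀, p, q, z₀] (by
    intro i j
    fin_cases i <;> fin_cases j <;>
      simp [diamondGram, Matrix.vecHead, Matrix.vecTail, hx₀z, hx₀x₀, hx₀p, hx₀q, hz₀p, hz₀q,
        hpp, hqq, hpq, hpx₀, hqx₀, hpz₀, hqz₀, hqp, hz₀x, hz₀z₀])
  have hb0 : b 0 = x₀ := by simpa using hb 0
  have hb1 : b 1 = p := by simpa using hb 1
  have hb2 : b 2 = q := by simpa using hb 2
  have hb3 : b 3 = z₀ := by simpa using hb 3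
  -- expansion in the basis
  have hexp : ∀ u : g, ∃ r0 r1 r2 r3 : ℂ, u = r0 • x₀ + r1 • p + r2 • q + r3 • z₀ := by
    intro u
    refine ⟨b.repr u 0, b.repr u 1, b.repr u 2, b.repr u 3, ?_⟩
    have h := b.sum_repr u
    rw [Fin.sum_univ_four, hb0, hb1, hb2, hb3] at h
    exact h.symm
  -- elements orthogonal to z₀, p, x₀ are multiples of p
  have hmul : ∀ u : g, B u z₀ = 0 → B u p = 0 → B u x₀ = 0 → u = (B u q) • p := by
    intro u h1 h2 h3
    obtain ⟨r0, r1, r2, r3, hu⟩ := hexp u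
    rw [hu] at h1 h2 h3 ⊢
    simp only [map_add, map_smul, LinearMap.add_apply, LinearMap.smul_apply, smul_eq_mul] at h1 h2 h3 ⊢
    rw [hx₀z, hpz₀, hqz₀, hz₀z₀] at h1
    rw [hx₀p, hpp, hqp, hz₀p] at h2
    rw [hx₀x₀, hpx₀, hqx₀, hz₀x] at h3
    rw [hx₀q, hpq, hqq, hz₀q]
    have hr0 : r0 = 0 := by linear_combination h1
    have hr2 : r2 = 0 := by linear_combination h2
    have hr3 : r3 = 0 := by linear_combination h3
    rw [hr0, hr2, hr3]
    simp
  -- same for q and z₀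
  have hmulq : ∀ u : g, B u z₀ = 0 → B u q = 0 → B u x₀ = 0 → u = (B u p) • q := by
    intro u h1 h2 h3
    obtain ⟨r0, r1, r2, r3, hu⟩ := hexp u
    rw [hu] at h1 h2 h3 ⊢
    simp only [map_add, map_smul, LinearMap.add_apply, LinearMap.smul_apply, smul_eq_mul] at h1 h2 h3 ⊢
    rw [hx₀z, hpz₀, hqz₀, hz₀z₀] at h1
    rw [hx₀q, hpq, hqq, hz₀q] at h2
    rw [hx₀x₀, hpx₀, hqx₀, hz₀x] at h3
    rw [hx₀p, hpp, hqp, hz₀p]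
    have hr0 : r0 = 0 := by linear_combination h1
    have hr1 : r1 = 0 := by linear_combination h2
    have hr3 : r3 = 0 := by linear_combination h3
    rw [hr0, hr1, hr3]
    simp
  have hmulz : ∀ u : g, B u z₀ = 0 → B u q = 0 → B u p = 0 → u = (B u x₀) • z₀ := by
    intro u h1 h2 h3
    obtain ⟨r0, r1, r2, r3, hu⟩ := hexp u
    rw [hu] at h1 h2 h3 ⊢
    simp only [map_add, map_smul, LinearMap.add_apply, LinearMap.smul_apply, smul_eq_mul] at h1 h2 h3 ⊢
    rw [hx₀z, hpz₀, hqz₀, hz₀z₀] at h1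
    rw [hx₀q, hpq, hqq, hz₀q] at h2
    rw [hx₀p, hpp, hqp, hz₀p] at h3
    rw [hx₀x₀, hpx₀, hqx₀, hz₀x]
    have hr0 : r0 = 0 := by linear_combination h1
    have hr1 : r1 = 0 := by linear_combination h2
    have hr2 : r2 = 0 := by linear_combination h3
    rw [hr0, hr1, hr2]
    simp
  -- the trick : B ⁅a,b⁆ a = 0 when a appears twice
  have htrick : ∀ a c : g, B ⁅a, c⁆ a = 0 := by
    intro a c
    have h1 : B ⁅a, c⁆ a = B a ⁅c, a⁆ := hinv a c a
    have h2 : B a ⁅c, a⁆ = B ⁅c, a⁆ a := hsymm a ⁅c, a⁆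
    have h3 : (⁅c, a⁆ : g) = -⁅a, c⁆ := by rw [← lie_skew]
    rw [h2, h3] at h1
    simp only [map_neg, LinearMap.neg_apply] at h1
    linear_combination h1 / 2
  -- bracket structure
  set α : ℂ := B ⁅x₀, p⁆ q with hα
  have hxp : ⁅x₀, p⁆ = α • p := by
    have h1 : B ⁅x₀, p⁆ z₀ = 0 := by rw [hinv, hz₀c' p]; simp
    have h2 : B ⁅x₀, p⁆ p = 0 := by rw [hinv]; simp
    have h3 : B ⁅x₀, p⁆ x₀ = 0 := htrick x₀ p
    exact hmul _ h1 h2 h3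
  have hpqb : ⁅p, q⁆ = α • z₀ := by
    have h1 : B ⁅p, q⁆ z₀ = 0 := by rw [hinv, hz₀c' q]; simp
    have h2 : B ⁅p, q⁆ q = 0 := by rw [hinv]; simp
    have h3 : B ⁅p, q⁆ p = 0 := htrick p q
    have h5 := hmulz _ h1 h2 h3
    have h6 : B ⁅p, q⁆ x₀ = α := by
      rw [hsymm, ← hinv, hα]
    rw [h6] at h5
    exact h5
  have hxq : ⁅x₀, q⁆ = (-α) • q := by
    have h1 : B ⁅x₀, q⁆ z₀ = 0 := by rw [hinv, hz₀c' q]; simp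
    have h2 : B ⁅x₀, q⁆ q = 0 := by rw [hinv]; simp
    have h5 := hmulq _ h1 h2 (htrick x₀ q)
    have h6 : B ⁅x₀, q⁆ p = -α := by
      rw [hinv]
      have hqp' : (⁅q, p⁆ : g) = -⁅p, q⁆ := by rw [← lie_skew]
      rw [hqp', map_neg, ← hinv x₀ p q]
    rw [h6] at h5
    exact h5
  -- α is nonzero, otherwise g would be abelian
  have hα0 : α ≠ 0 := by
    intro h0
    apply hnonab
    have e1 : (⁅x₀, p⁆ : g) = 0 := by rw [hxp, h0, zero_smul]
    have e2 : (⁅x₀, q⁆ : g) = 0 := by rw [hxq, h0, neg_zero, zero_smul]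
    have e3 : (⁅p, q⁆ : g) = 0 := by rw [hpqb, h0, zero_smul]
    have e1' : (⁅p, x₀⁆ : g) = 0 := by rw [← lie_skew, e1, neg_zero]
    have e2' : (⁅q, x₀⁆ : g) = 0 := by rw [← lie_skew, e2, neg_zero]
    have e3' : (⁅q, p⁆ : g) = 0 := by rw [← lie_skew, e3, neg_zero]
    constructor
    intro u w
    obtain ⟨r0, r1, r2, r3, hu⟩ := hexp u
    obtain ⟨s0, s1, s2, s3, hw⟩ := hexp w
    rw [hu, hw]
    simp only [add_lie, lie_add, smul_lie, lie_smul, lie_self, e1, e2, e3, e1', e2', e3',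
      hz₀c, hz₀c', smul_zero, add_zero, zero_add]
  -- the final basis
  set X : g := α⁻¹ • x₀ with hX
  set Z : g := α • z₀ with hZ
  have gram : ∀ i j, B ((![X, p, q, Z] : Fin 4 → g) i) ((![X, p, q, Z] : Fin 4 → g) j) =
      diamondGram i j := by
    intro i j
    fin_cases i <;> fin_cases j <;>
      simp [diamondGram, Matrix.vecHead, Matrix.vecTail, hX, hZ, map_smul, smul_eq_mul,
        hx₀z, hx₀x₀, hx₀p, hx₀q, hz₀p, hz₀q, hpp, hqq, hpq, hpx₀, hqx₀, hpz₀, hqz₀, hqp,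
        hz₀x, hz₀z₀, hα0]
  obtain ⟨b', hb'⟩ := diamond_basis_aux hdim B ![X, p, q, Z] gram
  have hb'0 : b' 0 = X := by simpa using hb' 0
  have hb'1 : b' 1 = p := by simpa using hb' 1
  have hb'2 : b' 2 = q := by simpa using hb' 2
  have hb'3 : b' 3 = Z := by simpa using hb' 3
  -- final brackets
  have fXp : (⁅X, p⁆ : g) = p := by
    rw [hX, smul_lie, hxp, smul_smul, inv_mul_cancel₀ hα0, one_smul]
  have fXq : (⁅X, q⁆ : g) = -q := by
    rw [hX, smul_lie, hxq, smul_smul]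
    field_simp
    simp
  have fpq : (⁅p, q⁆ : g) = Z := by rw [hpqb, hZ]
  have fXZ : (⁅X, Z⁆ : g) = 0 := by
    rw [hX, hZ, smul_lie, lie_smul, hz₀c' x₀, smul_zero, smul_zero]
  have fpZ : (⁅p, Z⁆ : g) = 0 := by rw [hZ, lie_smul, hz₀c' p, smul_zero]
  have fqZ : (⁅q, Z⁆ : g) = 0 := by rw [hZ, lie_smul, hz₀c' q, smul_zero]
  have fpX : (⁅p, X⁆ : g) = -p := by rw [← lie_skew, fXp]
  have fqX : (⁅q, X⁆ : g) = q := by rw [← lie_skew, fXq, neg_neg]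
  have fqp : (⁅q, p⁆ : g) = -Z := by rw [← lie_skew, fpq]
  have fZX : (⁅Z, X⁆ : g) = 0 := by rw [← lie_skew, fXZ, neg_zero]
  have fZp : (⁅Z, p⁆ : g) = 0 := by rw [← lie_skew, fpZ, neg_zero]
  have fZq : (⁅Z, q⁆ : g) = 0 := by rw [← lie_skew, fqZ, neg_zero]
  refine ⟨b', ?_, ?_⟩
  · intro i j
    rw [hb' i, hb' j]
    exact gram i j
  · intro i j
    fin_cases i <;> fin_cases j <;>
      simp [hb'0, hb'1, hb'2, hb'3, Matrix.vecHead, Matrix.vecTail,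
        fXp, fXq, fpq, fXZ, fpZ, fqZ, fpX, fqX, fqp, fZX, fZp, fZq]
end

section
/- Let (g,B) be a non-Abelian solvable quadratic Lie algebra with dim(g) = 4. Then the center Z(g) of g is totally isotropic for B, dim([g,g]) = 3, and dim(Z(g)) = 1. -/
open Module

section Aux

variable {g : Type} [LieRing g] [LieAlgebra ℂ g]

lemma aux_center_lie_left {z : g} (hz : z ∈ LieAlgebra.center ℂ g) (w : g) : ⁅z, w⁆ = 0 := by
  rw [← lie_skew, (LieModule.mem_maxTrivSubmodule ℂ g g z).1 hz w, neg_zero]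

lemma aux_center_lie_right {z : g} (hz : z ∈ LieAlgebra.center ℂ g) (w : g) : ⁅w, z⁆ = 0 :=
  (LieModule.mem_maxTrivSubmodule ℂ g g z).1 hz w

lemma aux_span_bracket (e f : g)
    (h : ∀ x : g, ∃ z ∈ LieAlgebra.center ℂ g, ∃ a b : ℂ, x = z + a • e + b • f) :
    (⁅(⊤ : LieIdeal ℂ g), (⊤ : LieIdeal ℂ g)⁆ : LieIdeal ℂ g).toSubmodule ≤
      Submodule.span ℂ {⁅e, f⁆} := by
  rw [LieSubmodule.lieIdeal_oper_eq_linear_span']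
  refine Submodule.span_le.2 ?_
  rintro m ⟨x, -, y, -, rfl⟩
  obtain ⟨z, hz, a, b, rfl⟩ := h x
  obtain ⟨z', hz', a', b', rfl⟩ := h y
  have key : ⁅z + a • e + b • f, z' + a' • e + b' • f⁆ = (a * b' - b * a') • ⁅e, f⁆ := by
    simp only [add_lie, lie_add, lie_smul, smul_lie, lie_self, smul_zero,
      aux_center_lie_left hz, aux_center_lie_right hz', zero_add, add_zero, smul_smul]
    rw [← lie_skew e f]
    module
  rw [key]
  exact Submodule.smul_mem _ _ (Submodule.mem_span_singleton_self _)

end Aux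

/-- Let `(g, B)` be a non-Abelian solvable quadratic Lie algebra of dimension `4`.  Then
the center `Z(g)` is totally isotropic for `B`, `dim [g, g] = 3` and `dim Z(g) = 1`. -/
theorem solvable_quadratic_dim_four_center (g : Type) [LieRing g] [LieAlgebra ℂ g]
    [FiniteDimensional ℂ g]
    (B : LinearMap.BilinForm ℂ g)
    (hsymm : ∀ x y : g, B x y = B y x)
    (hnd : B.Nondegenerate)
    (hinv : ∀ x y z : g, B ⁅x, y⁆ z = B x ⁅y, z⁆)
    (hsolv : LieAlgebra.IsSolvable g)
    (hnonab : ¬ IsLieAbelian g)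
    (hdim : finrank ℂ g = 4) :
    (∀ x ∈ LieAlgebra.center ℂ g, ∀ y ∈ LieAlgebra.center ℂ g, B x y = 0) ∧
    finrank ℂ ↥(⁅(⊤ : LieIdeal ℂ g), (⊤ : LieIdeal ℂ g)⁆ : LieIdeal ℂ g).toSubmodule = 3 ∧
    finrank ℂ ↥(LieAlgebra.center ℂ g).toSubmodule = 1 := by
  classical
  have hrefl : B.IsRefl := fun x y h => by rw [hsymm]; exact h
  set D : LieIdeal ℂ g := ⁅(⊤ : LieIdeal ℂ g), (⊤ : LieIdeal ℂ g)⁆ with hDdef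
  set Z := LieAlgebra.center ℂ g with hZdef
  have hmemD : ∀ x y : g, ⁅x, y⁆ ∈ D := fun x y => by
    rw [hDdef]
    exact LieSubmodule.lie_mem_lie (LieSubmodule.mem_top x) (LieSubmodule.mem_top y)
  -- Step A : Z = D^⊥
  have horth : Z.toSubmodule = B.orthogonal D.toSubmodule := by
    ext x
    constructor
    · intro hx
      rw [LinearMap.BilinForm.mem_orthogonal_iff]
      intro d hd
      have hle : D.toSubmodule ≤ LinearMap.ker (B.flip x) := by
        rw [hDdef, LieSubmodule.lieIdeal_oper_eq_linear_span']
        refine Submodule.span_le.2 ?_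
        rintro m ⟨u, -, v, -, rfl⟩
        have hz : (B ⁅u, v⁆) x = 0 := by rw [hinv, aux_center_lie_right hx, map_zero]
        exact hz
      have := hle hd
      simpa using this
    · intro hx
      rw [LieSubmodule.mem_toSubmodule, hZdef, LieModule.mem_maxTrivSubmodule]
      intro y
      apply hnd.1
      intro w
      rw [hsymm, ← hinv]
      exact hx ⁅w, y⁆ (hmemD w y)
  have hsum : finrank ℂ Z.toSubmodule = 4 - finrank ℂ D.toSubmodule := by
    rw [horth, LinearMap.BilinForm.finrank_orthogonal hnd, hdim]
  -- D ≠ ⊤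
  have hnt : Nontrivial g := Module.finrank_pos_iff (R := ℂ) (M := g) |>.1 (by omega)
  have hDne_top : D ≠ ⊤ := by
    have h1 : LieAlgebra.derivedSeries ℂ g 1 < ⊤ := LieAlgebra.derivedSeries_lt_top_of_solvable ℂ g
    have h2 : LieAlgebra.derivedSeries ℂ g 1 = D := by
      rw [LieAlgebra.derivedSeries_def, LieAlgebra.derivedSeriesOfIdeal_succ,
        LieAlgebra.derivedSeriesOfIdeal_zero, hDdef]
    rw [h2] at h1
    exact h1.ne
  have hDle3 : finrank ℂ D.toSubmodule ≤ 3 := by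
    by_contra hc
    have h4 : finrank ℂ D.toSubmodule = 4 :=
      le_antisymm (hdim ▸ Submodule.finrank_le _) (by omega)
    exact hDne_top (by
      rw [← LieSubmodule.toSubmodule_inj, LieSubmodule.top_toSubmodule]
      exact Submodule.eq_top_of_finrank_eq (by rw [h4, hdim]))
  have hDne_bot : finrank ℂ D.toSubmodule ≠ 0 := by
    intro h0
    apply hnonab
    have hb : D = ⊥ := by
      rw [← LieSubmodule.toSubmodule_inj, LieSubmodule.bot_toSubmodule]
      exact Submodule.finrank_eq_zero.1 h0
    constructor
    intro x y
    have := hmemD x y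
    rw [hb] at this
    simpa using this
  -- decomposition through a complement of the center
  have hdecomp : ∀ W : Submodule ℂ g, Z.toSubmodule ⊔ W = ⊤ →
      ∀ x : g, ∃ z ∈ Z, ∃ w ∈ W, x = z + w := by
    intro W hW x
    have : x ∈ Z.toSubmodule ⊔ W := hW ▸ Submodule.mem_top
    obtain ⟨z, hz, w, hw, h⟩ := Submodule.mem_sup.1 this
    exact ⟨z, hz, w, hw, h.symm⟩
  -- rule out finrank D = 1 and 2
  have hD3 : finrank ℂ D.toSubmodule = 3 := by
    rcases (by omega : finrank ℂ D.toSubmodule = 1 ∨ finrank ℂ D.toSubmodule = 2 ∨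
        finrank ℂ D.toSubmodule = 3) with h | h | h
    · -- finrank D = 1, finrank Z = 3, complement of dim 1
      exfalso
      obtain ⟨W, hW⟩ := Submodule.exists_isCompl Z.toSubmodule
      have hWr : finrank ℂ W = 1 := by
        have h5 := Submodule.finrank_add_eq_of_isCompl hW
        rw [hsum, h, hdim] at h5; omega
      obtain b := Module.finBasisOfFinrankEq ℂ W hWr
      set e : g := (b 0 : g) with he
      have hx : ∀ x : g, ∃ z ∈ LieAlgebra.center ℂ g, ∃ a c : ℂ, x = z + a • e + c • (0 : g) := by
        intro x
        obtain ⟨z, hz, w, hw, rfl⟩ := hdecomp W hW.sup_eq_top x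
        refine ⟨z, hz, b.repr ⟨w, hw⟩ 0, 0, ?_⟩
        have h6 : (⟨w, hw⟩ : W) = b.repr ⟨w, hw⟩ 0 • b 0 := by
          conv_lhs => rw [← b.sum_repr ⟨w, hw⟩]
          simp [Fin.sum_univ_one]
        have hw' : w = b.repr ⟨w, hw⟩ 0 • e := congrArg (Submodule.subtype W) h6
        conv_lhs => rw [hw']
        simp
      have hle := aux_span_bracket e 0 hx
      rw [lie_zero] at hle
      rw [hDdef] at h
      have h7 : (⁅(⊤ : LieIdeal ℂ g), (⊤ : LieIdeal ℂ g)⁆ : LieIdeal ℂ g).toSubmodule = ⊥ :=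
        le_bot_iff.1 (by rwa [Submodule.span_zero_singleton] at hle)
      rw [h7] at h
      simp at h
    · -- finrank D = 2, finrank Z = 2, complement of dim 2
      exfalso
      obtain ⟨W, hW⟩ := Submodule.exists_isCompl Z.toSubmodule
      have hWr : finrank ℂ W = 2 := by
        have h5 := Submodule.finrank_add_eq_of_isCompl hW
        rw [hsum, h, hdim] at h5; omega
      obtain b := Module.finBasisOfFinrankEq ℂ W hWr
      set e : g := (b 0 : g) with he
      set f : g := (b 1 : g) with hf
      have hx : ∀ x : g, ∃ z ∈ LieAlgebra.center ℂ g, ∃ a c : ℂ, x = z + a • e + c • f := by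
        intro x
        obtain ⟨z, hz, w, hw, rfl⟩ := hdecomp W hW.sup_eq_top x
        refine ⟨z, hz, b.repr ⟨w, hw⟩ 0, b.repr ⟨w, hw⟩ 1, ?_⟩
        have h6 : (⟨w, hw⟩ : W) = b.repr ⟨w, hw⟩ 0 • b 0 + b.repr ⟨w, hw⟩ 1 • b 1 := by
          conv_lhs => rw [← b.sum_repr ⟨w, hw⟩]
          rw [Fin.sum_univ_two]
        have hw' : w = b.repr ⟨w, hw⟩ 0 • e + b.repr ⟨w, hw⟩ 1 • f :=
          congrArg (Submodule.subtype W) h6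
        conv_lhs => rw [hw']
        abel
      have hle := aux_span_bracket e f hx
      rw [← hDdef] at hle
      have h8 : finrank ℂ D.toSubmodule ≤ 1 := by
        refine le_trans (Submodule.finrank_mono hle) ?_
        by_cases hef : ⁅e, f⁆ = 0
        · rw [hef, Submodule.span_zero_singleton, finrank_bot]
          omega
        · rw [finrank_span_singleton hef]
      omega
    · exact h
  -- Step C : Z ⊆ D
  have hZ1 : finrank ℂ Z.toSubmodule = 1 := by rw [hsum, hD3]
  have hZD : Z.toSubmodule ≤ D.toSubmodule := by
    by_contra hc
    obtain ⟨c, hcZ, hcD⟩ := SetLike.not_le_iff_exists.1 hc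
    have hsup : D.toSubmodule ⊔ Z.toSubmodule = ⊤ := by
      have hlt : D.toSubmodule < D.toSubmodule ⊔ Z.toSubmodule := by
        refine lt_of_le_of_ne le_sup_left ?_
        intro hEq
        exact hcD (hEq ▸ Submodule.mem_sup_right hcZ)
      have h1 : 3 < finrank ℂ ↥(D.toSubmodule ⊔ Z.toSubmodule) := by
        rw [← hD3]; exact Submodule.finrank_lt_finrank_of_lt hlt
      have h2 : finrank ℂ ↥(D.toSubmodule ⊔ Z.toSubmodule) ≤ 4 :=
        hdim ▸ Submodule.finrank_le _
      exact Submodule.eq_top_of_finrank_eq (by rw [hdim]; omega)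
    -- D is perfect
    have hperf : D ≤ ⁅D, D⁆ := by
      rw [← LieSubmodule.toSubmodule_le_toSubmodule]
      conv_lhs => rw [hDdef]
      rw [LieSubmodule.lieIdeal_oper_eq_linear_span' (I := (⊤ : LieIdeal ℂ g))]
      refine Submodule.span_le.2 ?_
      rintro m ⟨x, -, y, -, rfl⟩
      have hx : x ∈ D.toSubmodule ⊔ Z.toSubmodule := hsup ▸ Submodule.mem_top
      have hy : y ∈ D.toSubmodule ⊔ Z.toSubmodule := hsup ▸ Submodule.mem_top
      obtain ⟨d, hd, z, hz, rfl⟩ := Submodule.mem_sup.1 hx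
      obtain ⟨d', hd', z', hz', rfl⟩ := Submodule.mem_sup.1 hy
      have heq : ⁅d + z, d' + z'⁆ = ⁅d, d'⁆ := by
        simp [add_lie, lie_add, aux_center_lie_right hz', aux_center_lie_left hz]
      rw [heq]
      exact LieSubmodule.lie_mem_lie hd hd'
    have hall : ∀ n, D ≤ LieAlgebra.derivedSeries ℂ g n := by
      intro n
      induction n with
      | zero => exact le_top
      | succ k ih =>
        rw [LieAlgebra.derivedSeries_def, LieAlgebra.derivedSeriesOfIdeal_succ,
          ← LieAlgebra.derivedSeries_def]
        exact le_trans hperf (LieSubmodule.mono_lie ih ih)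
    obtain ⟨k, hk⟩ := LieAlgebra.IsSolvable.solvable ℂ g
    have hDbot : D ≤ ⊥ := by rw [← hk]; exact hall k
    have h9 : D.toSubmodule = ⊥ := by
      have : D = ⊥ := le_bot_iff.1 hDbot
      rw [this, LieSubmodule.bot_toSubmodule]
    rw [h9] at hD3
    simp at hD3
  refine ⟨?_, hD3, hZ1⟩
  intro x hx y hy
  have hyD : y ∈ D.toSubmodule := hZD hy
  have hxo : x ∈ B.orthogonal D.toSubmodule := horth ▸ hx
  rw [hsymm]
  exact hxo y hyD
end

section
/- Every skew-symmetric derivation of the diamond Lie algebra g_4 is inner: if g_4 has basis {X,P,Q,Z} with brackets [X,P]=P, [X,Q]=−Q, [P,Q]=Z and invariant form B given by B(X,Z)=B(P,Q)=1 (other values on basis pairs zero), and D is a derivation of g_4 satisfying B(D(U),V) = −B(U,D(V)) for all U,V ∈ g_4, then there exists W ∈ g_4 such that D = ad(W); indeed D = ad(aX − yP + zQ) for suitable a, y, z ∈ ℂ. -/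
/-- **Skew-symmetric derivations of the diamond Lie algebra are inner.**
Let `g₄` be the diamond Lie algebra with basis `{X, P, Q, Z}` (here `b 0 = X`,
`b 1 = P`, `b 2 = Q`, `b 3 = Z`), brackets `[X,P] = P`, `[X,Q] = -Q`, `[P,Q] = Z` (all
other brackets of basis elements zero) and invariant form `B` with
`B(X,Z) = B(P,Q) = 1`, all other values on basis pairs zero.  If `D` is a derivation of
`g₄` with `B(D(U), V) = -B(U, D(V))` for all `U, V`, then `D` is inner: `D = ad(W)` for
some `W`, indeed `W = a·X - y·P + z·Q` for suitable `a, y, z ∈ ℂ`. -/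
theorem diamond_skew_derivation_inner (g : Type) [LieRing g] [LieAlgebra ℂ g]
    [FiniteDimensional ℂ g]
    (B : LinearMap.BilinForm ℂ g)
    (b : Module.Basis (Fin 4) ℂ g)
    (hB : ∀ i j, B (b i) (b j) =
      ![![0, 0, 0, 1],
        ![0, 0, 1, 0],
        ![0, 1, 0, 0],
        ![1, 0, 0, 0]] i j)
    (hbr : ∀ i j, ⁅b i, b j⁆ =
      ![![0, b 1, -(b 2), 0],
        ![-(b 1), 0, b 3, 0],
        ![b 2, -(b 3), 0, 0],
        ![(0 : g), 0, 0, 0]] i j)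
    (D : g →ₗ[ℂ] g)
    (hder : ∀ x y : g, D ⁅x, y⁆ = ⁅D x, y⁆ + ⁅x, D y⁆)
    (hskew : ∀ x y : g, B (D x) y = -(B x (D y))) :
    ∃ W : g, (∀ v : g, D v = ⁅W, v⁆) ∧
      ∃ a y z : ℂ, W = a • b 0 - y • b 1 + z • b 2 := by
  -- coordinates of D on the basis
  set c : Fin 4 → Fin 4 → ℂ := fun i j => b.repr (D (b i)) j with hc
  have hD : ∀ i, D (b i) = c i 0 • b 0 + c i 1 • b 1 + c i 2 • b 2 + c i 3 • b 3 := by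
    intro i
    have h := b.sum_repr (D (b i))
    rw [Fin.sum_univ_four] at h
    exact h.symm
  -- linear independence extraction
  have hext : ∀ x0 x1 x2 x3 : ℂ, x0 • b 0 + x1 • b 1 + x2 • b 2 + x3 • b 3 = 0 →
      x0 = 0 ∧ x1 = 0 ∧ x2 = 0 ∧ x3 = 0 := by
    intro x0 x1 x2 x3 h
    have hli := Fintype.linearIndependent_iff.mp b.linearIndependent ![x0, x1, x2, x3] ?_
    · exact ⟨by simpa using hli 0, by simpa using hli 1, by simpa using hli 2,
        by simpa using hli 3⟩
    · rw [Fin.sum_univ_four]; simpa using h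
  -- bracket values
  have e01 : ⁅b 0, b 1⁆ = b 1 := by simpa using hbr 0 1
  have e02 : ⁅b 0, b 2⁆ = -(b 2) := by simpa using hbr 0 2
  have e03 : ⁅b 0, b 3⁆ = 0 := by simpa using hbr 0 3
  have e10 : ⁅b 1, b 0⁆ = -(b 1) := by simpa using hbr 1 0
  have e12 : ⁅b 1, b 2⁆ = b 3 := by simpa using hbr 1 2
  have e13 : ⁅b 1, b 3⁆ = 0 := by simpa using hbr 1 3
  have e20 : ⁅b 2, b 0⁆ = b 2 := by simpa using hbr 2 0
  have e21 : ⁅b 2, b 1⁆ = -(b 3) := by simpa using hbr 2 1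
  have e23 : ⁅b 2, b 3⁆ = 0 := by simpa using hbr 2 3
  have e30 : ⁅b 3, b 0⁆ = 0 := by simpa using hbr 3 0
  have e31 : ⁅b 3, b 1⁆ = 0 := by simpa using hbr 3 1
  have e32 : ⁅b 3, b 2⁆ = 0 := by simpa using hbr 3 2
  -- skew equations
  have s00 := hskew (b 0) (b 0)
  rw [hD 0] at s00
  simp only [map_add, map_smul, LinearMap.add_apply, LinearMap.smul_apply, hB] at s00
  simp at s00
  have f13 : c 0 3 = 0 := by linear_combination s00 / 2
  -- s00 : c 0 3 = 0 (hopefully)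
  have s12 := hskew (b 1) (b 2)
  rw [hD 1, hD 2] at s12
  simp only [map_add, map_smul, LinearMap.add_apply, LinearMap.smul_apply, hB] at s12
  simp [Matrix.vecHead, Matrix.vecTail] at s12
  -- derivation equations
  have d01 := hder (b 0) (b 1)
  rw [e01, hD 0, hD 1] at d01
  simp only [add_lie, lie_add, smul_lie, lie_smul, e01, e02, e03, e10, e12, e13, e20, e21,
    e23, e30, e31, e32, lie_self, smul_zero, smul_neg, add_zero, zero_add] at d01
  have d02 := hder (b 0) (b 2)
  rw [e02, map_neg, hD 0, hD 2] at d02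
  simp only [map_neg, add_lie, lie_add, smul_lie, lie_smul, e01, e02, e03, e10, e12, e13,
    e20, e21, e23, e30, e31, e32, lie_self, smul_zero, smul_neg, add_zero, zero_add] at d02
  have d12 := hder (b 1) (b 2)
  rw [e12, hD 1, hD 2, hD 3] at d12
  simp only [add_lie, lie_add, smul_lie, lie_smul, e01, e02, e03, e10, e12, e13, e20, e21,
    e23, e30, e31, e32, lie_self, smul_zero, smul_neg, add_zero, zero_add] at d12
  obtain ⟨f1, f2, f3, f4⟩ := hext (c 1 0) (-(c 0 0)) (c 1 2 + c 1 2) (c 1 3 + c 0 2)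
    (by linear_combination (norm := module) d01)
  obtain ⟨f5, f6, f7', f8⟩ := hext (-(c 2 0)) (-(c 2 1 + c 2 1)) (c 0 0) (-(c 2 3 + c 0 1))
    (by linear_combination (norm := module) d02)
  obtain ⟨f9, f10, f11, f12⟩ := hext (c 3 0) (c 3 1 + c 2 0) (c 3 2 + c 1 0)
    (c 3 3 - c 1 1 - c 2 2) (by linear_combination (norm := module) d12)
  -- clean scalar facts
  have g00 : c 0 0 = 0 := by linear_combination -f2
  have g03 : c 0 3 = 0 := f13
  have g10 : c 1 0 = 0 := f1
  have g12 : c 1 2 = 0 := by linear_combination f3 / 2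
  have g13 : c 1 3 = -c 0 2 := by linear_combination f4
  have g20 : c 2 0 = 0 := by linear_combination -f5
  have g21 : c 2 1 = 0 := by linear_combination -f6 / 2
  have g22 : c 2 2 = -c 1 1 := by linear_combination s12
  have g23 : c 2 3 = -c 0 1 := by linear_combination -f8
  have g30 : c 3 0 = 0 := f9
  have g31 : c 3 1 = 0 := by linear_combination f10 + f5
  have g32 : c 3 2 = 0 := by linear_combination f11 - f1
  have g33 : c 3 3 = 0 := by linear_combination f12 + s12
  have hD0 : D (b 0) = c 0 1 • b 1 + c 0 2 • b 2 := by
    rw [hD 0, g00, g03]; module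
  have hD1 : D (b 1) = c 1 1 • b 1 - c 0 2 • b 3 := by
    rw [hD 1, g10, g12, g13]; module
  have hD2 : D (b 2) = -c 1 1 • b 2 - c 0 1 • b 3 := by
    rw [hD 2, g20, g21, g22, g23]; module
  have hD3 : D (b 3) = 0 := by
    rw [hD 3, g30, g31, g32, g33]; module
  refine ⟨c 1 1 • b 0 - c 0 1 • b 1 + c 0 2 • b 2, ?_, c 1 1, c 0 1, c 0 2, rfl⟩
  have w0 : ⁅c 1 1 • b 0 - c 0 1 • b 1 + c 0 2 • b 2, b 0⁆ = D (b 0) := by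
    rw [hD0]
    simp only [add_lie, sub_lie, smul_lie, e10, e20, lie_self, smul_zero, smul_neg]
    module
  have w1 : ⁅c 1 1 • b 0 - c 0 1 • b 1 + c 0 2 • b 2, b 1⁆ = D (b 1) := by
    rw [hD1]
    simp only [add_lie, sub_lie, smul_lie, e01, e21, lie_self, smul_zero, smul_neg]
    module
  have w2 : ⁅c 1 1 • b 0 - c 0 1 • b 1 + c 0 2 • b 2, b 2⁆ = D (b 2) := by
    rw [hD2]
    simp only [add_lie, sub_lie, smul_lie, e02, e12, lie_self, smul_zero, smul_neg]
    module
  have w3 : ⁅c 1 1 • b 0 - c 0 1 • b 1 + c 0 2 • b 2, b 3⁆ = D (b 3) := by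
    rw [hD3]
    simp only [add_lie, sub_lie, smul_lie, e03, e13, e23, smul_zero, smul_neg]
    module
  intro v
  conv_lhs => rw [← b.sum_repr v, Fin.sum_univ_four]
  conv_rhs => rw [← b.sum_repr v, Fin.sum_univ_four]
  simp only [map_add, map_smul, lie_add, lie_smul, w0, w1, w2, w3]
end
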